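/- arXiv:0910.0237 — 4 statements merged into one kernel-verified Lean document; each statement's English description precedes it below -/
import Mathlib

section
/- Let π : X → Y be a factor map from a Smale space (X,F) to a finitely presented system (Y,f). Then there exists δ_π > 0 such that whenever x, x' ∈ X satisfy d(x,x') < δ_π (so that the bracket [x,x'] is defined in X), one has π([x,x']) = [π(x), π(x')]. -/
open Filter Topology Set

/-- `f` is expansive with expansive constant `c`. -/
def Expansive {X : Type*} [MetricSpace X] (f : Equiv.Perm X) (c : ℝ) : Prop :=
  ∀ p q : X, p ≠ q → ∃ n : ℤ, c < dist ((f ^ n) p) ((f ^ n) q)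

/-- The ε-stable set of `x`. -/
def Ws {X : Type*} [MetricSpace X] (f : Equiv.Perm X) (ε : ℝ) (x : X) : Set X :=
  {y | ∀ n : ℕ, dist ((f ^ (n : ℤ)) x) ((f ^ (n : ℤ)) y) < ε}

/-- The ε-unstable set of `x`. -/
def Wu {X : Type*} [MetricSpace X] (f : Equiv.Perm X) (ε : ℝ) (x : X) : Set X :=
  {y | ∀ n : ℕ, dist ((f ^ (-(n : ℤ))) x) ((f ^ (-(n : ℤ))) y) < ε}

/-- The stable set of `x`. -/
def stableSet {X : Type*} [MetricSpace X] (f : Equiv.Perm X) (x : X) : Set X :=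
  {y | Filter.Tendsto (fun n : ℕ => dist ((f ^ (n : ℤ)) x) ((f ^ (n : ℤ)) y))
    Filter.atTop (nhds 0)}

/-- The unstable set of `x`. -/
def unstableSet {X : Type*} [MetricSpace X] (f : Equiv.Perm X) (x : X) : Set X :=
  {y | Filter.Tendsto (fun n : ℕ => dist ((f ^ (-(n : ℤ))) x) ((f ^ (-(n : ℤ))) y))
    Filter.atTop (nhds 0)}

/-- Canonical coordinates: for all sufficiently small ε > 0 there is δ > 0 such that
points at distance < δ have a unique bracket `[x,y] = W^s_ε(x) ∩ W^u_ε(y)`. -/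
def CanonicalCoords {X : Type*} [MetricSpace X] (f : Equiv.Perm X) : Prop :=
  ∃ ε₀ > 0, ∀ ε : ℝ, 0 < ε → ε ≤ ε₀ → ∃ δ > 0, ∀ x y : X, dist x y < δ →
    ∃! z, z ∈ Ws f ε x ∩ Wu f ε y

/-- A Smale space: an expansive homeomorphism with canonical coordinates. -/
def IsSmale {X : Type*} [MetricSpace X] (f : Equiv.Perm X) : Prop :=
  Continuous (⇑f) ∧ Continuous (⇑f.symm) ∧ (∃ c > 0, Expansive f c) ∧ CanonicalCoords f

/-- Topological transitivity. -/
def TopTransitive {X : Type*} [MetricSpace X] (f : Equiv.Perm X) : Prop :=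
  ∀ U V : Set X, IsOpen U → IsOpen V → U.Nonempty → V.Nonempty →
    ∃ n : ℕ, ((f ^ (n : ℤ)) ⁻¹' U ∩ V).Nonempty

/-- A periodic point of `f`. -/
def IsPeriodicPoint {X : Type*} [MetricSpace X] (f : Equiv.Perm X) (p : X) : Prop :=
  ∃ N : ℕ, 0 < N ∧ (f ^ (N : ℤ)) p = p

/-- A factor map (surjective continuous semiconjugacy). -/
def IsFactorMap {X Y : Type*} [MetricSpace X] [MetricSpace Y]
    (F : Equiv.Perm X) (f : Equiv.Perm Y) (π : X → Y) : Prop :=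
  Continuous π ∧ Function.Surjective π ∧ ∀ x, π (F x) = f (π x)

/-- A map is u-resolving if it is injective on unstable sets. -/
def UResolving {X Y : Type*} [MetricSpace X] (F : Equiv.Perm X) (π : X → Y) : Prop :=
  ∀ x : X, Set.InjOn π (unstableSet F x)

/-- A map is s-resolving if it is injective on stable sets. -/
def SResolving {X Y : Type*} [MetricSpace X] (F : Equiv.Perm X) (π : X → Y) : Prop :=
  ∀ x : X, Set.InjOn π (stableSet F x)

/-- The shift map on bi-infinite sequences. -/
def shiftE (A : Type*) : Equiv.Perm (ℤ → A) where
  toFun x i := x (i + 1)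
  invFun x i := x (i - 1)
  left_inv x := funext fun i => congrArg x (by ring)
  right_inv x := funext fun i => congrArg x (by ring)

/-- The word `w` occurs in the sequence `x`. -/
def OccursIn {A : Type*} {k : ℕ} (w : Fin k → A) (x : ℤ → A) : Prop :=
  ∃ i : ℤ, ∀ j : Fin k, x (i + (j : ℤ)) = w j

/-- A subshift of finite type: the sequences avoiding a finite set of forbidden words. -/
def IsSFT {A : Type*} (S : Set (ℤ → A)) : Prop :=
  ∃ Fw : Set ((k : ℕ) × (Fin k → A)), Fw.Finite ∧
    S = {x | ∀ w ∈ Fw, ¬ OccursIn w.2 x}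

/-- A one-step SFT (vertex shift) with transition rule `T`. -/
def IsOneStepSFTFor {A : Type*} (T : A → A → Prop) (S : Set (ℤ → A)) : Prop :=
  S = {x | ∀ i : ℤ, T (x i) (x (i + 1))}

/-- `S` is invariant under the shift and its inverse. -/
def ShiftInvariant {A : Type*} (S : Set (ℤ → A)) : Prop :=
  (∀ x ∈ S, shiftE A x ∈ S) ∧ (∀ x ∈ S, (shiftE A).symm x ∈ S)

/-- A factor map from the subshift `(S, σ)` onto the system `(Y, f)`. -/
def IsSubshiftFactorMap {A Y : Type*} [TopologicalSpace A] [MetricSpace Y]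
    (S : Set (ℤ → A)) (f : Equiv.Perm Y) (φ : (ℤ → A) → Y) : Prop :=
  ContinuousOn φ S ∧ φ '' S = Set.univ ∧ ∀ x ∈ S, φ (shiftE A x) = f (φ x)

/-- Topological transitivity of the shift restricted to `S`. -/
def SubshiftTransitive {A : Type*} [TopologicalSpace A] (S : Set (ℤ → A)) : Prop :=
  ∀ U V : Set (ℤ → A), IsOpen U → IsOpen V → (U ∩ S).Nonempty → (V ∩ S).Nonempty →
    ∃ n : ℕ, (((shiftE A) ^ (n : ℤ)) ⁻¹' U ∩ V ∩ S).Nonempty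

/-- The stable set of `t` in the subshift `S`: points eventually agreeing with `t`. -/
def shiftStable {A : Type*} (S : Set (ℤ → A)) (t : ℤ → A) : Set (ℤ → A) :=
  {t' ∈ S | ∃ N : ℤ, ∀ i ≥ N, t' i = t i}

/-- A finitely presented system: an expansive system that is a factor of an SFT. -/
def FinitelyPresented {Y : Type*} [MetricSpace Y] (f : Equiv.Perm Y) : Prop :=
  Continuous (⇑f) ∧ Continuous (⇑f.symm) ∧ (∃ c > 0, Expansive f c) ∧
  ∃ (N : ℕ) (S : Set (ℤ → Fin N)), IsSFT S ∧ ShiftInvariant S ∧ S.Nonempty ∧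
    ∃ φ : (ℤ → Fin N) → Y, IsSubshiftFactorMap S f φ

lemma semiconj_zpow {X Y : Type*} (F : Equiv.Perm X) (f : Equiv.Perm Y) (π : X → Y)
    (h : ∀ x, π (F x) = f (π x)) : ∀ m : ℤ, ∀ a : X, π ((F ^ m) a) = (f ^ m) (π a) := by
  have hinv : ∀ a : X, π (F.symm a) = f.symm (π a) := by
    intro a
    have : f (π (F.symm a)) = f (f.symm (π a)) := by
      rw [← h, Equiv.apply_symm_apply, Equiv.apply_symm_apply]
    exact f.injective this
  intro m
  induction m using Int.induction_on with
  | zero => intro a; simp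
  | succ n ih =>
      intro a
      have h1 : (F ^ ((n : ℤ) + 1)) a = (F ^ (n : ℤ)) (F a) := by
        rw [zpow_add_one]; rfl
      have h2 : (f ^ ((n : ℤ) + 1)) (π a) = (f ^ (n : ℤ)) (f (π a)) := by
        rw [zpow_add_one]; rfl
      rw [h1, h2, ih (F a), h]
  | pred n ih =>
      intro a
      have h1 : (F ^ (-(n : ℤ) - 1)) a = (F ^ (-(n : ℤ))) (F.symm a) := by
        rw [zpow_sub_one]; rfl
      have h2 : (f ^ (-(n : ℤ) - 1)) (π a) = (f ^ (-(n : ℤ))) (f.symm (π a)) := by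
        rw [zpow_sub_one]; rfl
      rw [h1, h2, ih (F.symm a), hinv]

/-- For a factor map `π` from a Smale space `(X,F)` to a finitely presented
system `(Y,f)`, there is `δ_π > 0` such that if `d(x,x') < δ_π` (so the bracket `[x,x']`
is defined), then `π([x,x']) = [π(x), π(x')]`. -/
theorem stmt1 {X Y : Type*} [MetricSpace X] [CompactSpace X] [MetricSpace Y] [CompactSpace Y]
    (F : Equiv.Perm X) (f : Equiv.Perm Y)
    (hX : IsSmale F) (hY : FinitelyPresented f)
    (π : X → Y) (hπ : IsFactorMap F f π)
    (cX cY εX εY : ℝ) (hcX : 0 < cX) (hcY : 0 < cY)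
    (hEX : Expansive F cX) (hEY : Expansive f cY)
    (hεX0 : 0 < εX) (hεX : εX < cX / 2) (hεY0 : 0 < εY) (hεY : εY < cY / 2)
    (hbr : ∃ δ0 > 0, ∀ x y : X, dist x y < δ0 → ∃! z, z ∈ Ws F εX x ∩ Wu F εX y) :
    ∃ δπ > 0, ∀ x x' : X, dist x x' < δπ →
      (∃! z, z ∈ Ws F εX x ∩ Wu F εX x') ∧
      ∀ z ∈ Ws F εX x ∩ Wu F εX x', π z ∈ Ws f εY (π x) ∩ Wu f εY (π x') := by
  obtain ⟨πc, πs, πcomm⟩ := hπ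
  have hzc := semiconj_zpow F f π πcomm
  have hu : UniformContinuous π := CompactSpace.uniformContinuous_of_continuous πc
  obtain ⟨η, hη0, hη⟩ := Metric.uniformContinuous_iff.mp hu εY hεY0
  obtain ⟨-, -, -, ε₀, hε₀, hcc⟩ := hX
  set ε : ℝ := min (min η εX) ε₀ with hεdef
  have hεpos : 0 < ε := lt_min (lt_min hη0 hεX0) hε₀
  have hεle₀ : ε ≤ ε₀ := min_le_right _ _
  have hεleX : ε ≤ εX := le_trans (min_le_left _ _) (min_le_right _ _)
  have hεleη : ε ≤ η := le_trans (min_le_left _ _) (min_le_left _ _)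
  obtain ⟨δ1, hδ1, hbr1⟩ := hcc ε hεpos hεle₀
  obtain ⟨δ0, hδ0, hbr0⟩ := hbr
  refine ⟨min δ0 δ1, lt_min hδ0 hδ1, ?_⟩
  intro x x' hd
  obtain ⟨z₀, hz₀, huniq⟩ := hbr0 x x' (lt_of_lt_of_le hd (min_le_left _ _))
  obtain ⟨z₁, hz₁, -⟩ := hbr1 x x' (lt_of_lt_of_le hd (min_le_right _ _))
  refine ⟨⟨z₀, hz₀, huniq⟩, ?_⟩
  intro z hz
  have hz₁X : z₁ ∈ Ws F εX x ∩ Wu F εX x' :=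
    ⟨fun n => lt_of_lt_of_le (hz₁.1 n) hεleX, fun n => lt_of_lt_of_le (hz₁.2 n) hεleX⟩
  have hzz : z = z₁ := (huniq z hz).trans (huniq z₁ hz₁X).symm
  subst hzz
  constructor
  · intro n
    have h1 : dist ((F ^ (n : ℤ)) x) ((F ^ (n : ℤ)) z) < η :=
      lt_of_lt_of_le (hz₁.1 n) hεleη
    have := hη h1
    rwa [hzc, hzc] at this
  · intro n
    have h1 : dist ((F ^ (-(n : ℤ))) x') ((F ^ (-(n : ℤ))) z) < η :=
      lt_of_lt_of_le (hz₁.2 n) hεleη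
    have := hη h1
    rwa [hzc, hzc] at this
end

section
/- Let (X,F) be a transitive Smale space, (Y,f) finitely presented, π : X → Y a finite-to-one factor map, and M = min_{y ∈ Y} #π⁻¹(y). Then there exists a dense open set W ⊂ Y such that every periodic point of f in W has exactly M preimages under π. -/
open Filter Topology Set

lemma perm_zpow_add_apply {α : Type*} (g : Equiv.Perm α) (a b : ℤ) (x : α) :
    (g ^ (a + b)) x = (g ^ a) ((g ^ b) x) := by
  rw [zpow_add]; rfl

lemma semiconj_perm_zpow {X Y : Type*} (F : Equiv.Perm X) (f : Equiv.Perm Y) (π : X → Y)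
    (h : ∀ x, π (F x) = f (π x)) : ∀ (n : ℤ) (x : X), π ((F ^ n) x) = (f ^ n) (π x) := by
  have hinv : ∀ x, π (F⁻¹ x) = f⁻¹ (π x) := by
    intro x
    have h1 := h (F⁻¹ x)
    rw [show F (F⁻¹ x) = x from F.apply_symm_apply x] at h1
    rw [h1, show f⁻¹ (f (π (F⁻¹ x))) = π (F⁻¹ x) from f.symm_apply_apply _]
  intro n
  induction n using Int.induction_on with
  | zero => intro x; simp
  | succ k ih =>
      intro x
      calc π ((F ^ ((k : ℤ) + 1)) x) = π (F ((F ^ (k : ℤ)) x)) := by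
            rw [add_comm, perm_zpow_add_apply, zpow_one]
        _ = f (π ((F ^ (k : ℤ)) x)) := h _
        _ = f ((f ^ (k : ℤ)) (π x)) := by rw [ih]
        _ = (f ^ ((k : ℤ) + 1)) (π x) := by rw [add_comm, perm_zpow_add_apply, zpow_one]
  | pred k ih =>
      intro x
      calc π ((F ^ (-(k : ℤ) - 1)) x) = π (F⁻¹ ((F ^ (-(k : ℤ))) x)) := by
            rw [show (-(k : ℤ) - 1) = (-1) + (-(k : ℤ)) by ring, perm_zpow_add_apply, zpow_neg_one]
        _ = f⁻¹ (π ((F ^ (-(k : ℤ))) x)) := hinv _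
        _ = f⁻¹ ((f ^ (-(k : ℤ))) (π x)) := by rw [ih]
        _ = (f ^ (-(k : ℤ) - 1)) (π x) := by
            rw [show (-(k : ℤ) - 1) = (-1) + (-(k : ℤ)) by ring, perm_zpow_add_apply, zpow_neg_one]

lemma perm_zpow_fixed {α : Type*} (g : Equiv.Perm α) {x : α} (h : g x = x) :
    ∀ n : ℤ, (g ^ n) x = x := by
  intro n
  induction n using Int.induction_on with
  | zero => simp
  | succ k ih => rw [show ((k : ℤ) + 1) = 1 + (k : ℤ) by ring, perm_zpow_add_apply, ih, zpow_one, h]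
  | pred k ih =>
      rw [show (-(k : ℤ) - 1) = (-1) + (-(k : ℤ)) by ring, perm_zpow_add_apply, ih, zpow_neg_one]
      have h2 : g⁻¹ x = g⁻¹ (g x) := by rw [h]
      rw [show g⁻¹ (g x) = x from g.symm_apply_apply x] at h2
      exact h2

lemma perm_zpow_fixed_mul {α : Type*} (g : Equiv.Perm α) {x : α} {N : ℤ} (h : (g ^ N) x = x)
    (m : ℤ) : (g ^ (m * N)) x = x := by
  rw [mul_comm, zpow_mul]
  exact perm_zpow_fixed (g ^ N) h m

lemma perm_zpow_cancel {α : Type*} (g : Equiv.Perm α) {x : α} {a b : ℤ}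
    (h : (g ^ a) x = (g ^ b) x) : (g ^ (b - a)) x = x := by
  apply (g ^ a).injective
  rw [← perm_zpow_add_apply, show a + (b - a) = b by ring]
  exact h.symm

lemma perm_pow_continuous {α : Type*} [TopologicalSpace α] (g : Equiv.Perm α)
    (hg : Continuous ⇑g) (n : ℕ) : Continuous ⇑(g ^ (n : ℤ)) := by
  rw [zpow_natCast]
  induction n with
  | zero => simpa using continuous_id
  | succ k ih =>
      have hco : ⇑(g ^ (k + 1)) = ⇑(g ^ k) ∘ ⇑g := by
        funext x; rw [pow_succ]; rfl
      rw [hco]; exact ih.comp hg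

lemma fiber_usc {X Y : Type*} [MetricSpace X] [CompactSpace X] [MetricSpace Y]
    (π : X → Y) (hπc : Continuous π) (y₀ : Y) (ε' : ℝ) (hε' : 0 < ε') :
    ∃ δ > 0, ∀ y, dist y y₀ < δ → ∀ x, π x = y → ∃ x₀, π x₀ = y₀ ∧ dist x x₀ < ε' := by
  set U : Set X := ⋃ x₀ ∈ π ⁻¹' {y₀}, Metric.ball x₀ ε' with hU
  have hUo : IsOpen U := isOpen_biUnion (fun _ _ => Metric.isOpen_ball)
  have hCc : IsCompact Uᶜ := hUo.isClosed_compl.isCompact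
  have hKc : IsClosed (π '' Uᶜ) := (hCc.image hπc).isClosed
  have hy₀ : y₀ ∉ π '' Uᶜ := by
    rintro ⟨x, hxC, hxy⟩
    exact hxC (Set.mem_biUnion (show x ∈ π ⁻¹' {y₀} from hxy) (Metric.mem_ball_self hε'))
  obtain ⟨δ, hδ, hball⟩ := Metric.isOpen_iff.mp hKc.isOpen_compl y₀ hy₀
  refine ⟨δ, hδ, fun y hy x hx => ?_⟩
  have hxU : x ∈ U := by
    by_contra hxC
    exact (hball (show y ∈ Metric.ball y₀ δ from Metric.mem_ball.mpr hy)) ⟨x, hxC, hx⟩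
  obtain ⟨x₀, hx₀, hxball⟩ := Set.mem_iUnion₂.mp hxU
  exact ⟨x₀, hx₀, Metric.mem_ball.mp hxball⟩

lemma fiber_sep {X Y : Type*} [MetricSpace X] [CompactSpace X] [MetricSpace Y]
    (F : Equiv.Perm X) (f : Equiv.Perm Y) (π : X → Y)
    (hπc : Continuous π) (hsc : ∀ x, π (F x) = f (π x))
    (hfin : ∀ y : Y, (π ⁻¹' {y}).Finite)
    {cX : ℝ} (hcX : 0 < cX) (hFe : Expansive F cX)
    {cY : ℝ} (hcY : 0 < cY) (hfe : Expansive f cY)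
    (hcc : CanonicalCoords F) :
    ∃ δb > 0, ∀ p : Y, IsPeriodicPoint f p → ∀ z z', π z = p → π z' = p →
      dist z z' < δb → z = z' := by
  obtain ⟨ε₀, hε₀, hccε⟩ := hcc
  obtain ⟨επ, hεπ, hπu⟩ := Metric.uniformContinuous_iff.mp
    (CompactSpace.uniformContinuous_of_continuous hπc) cY hcY
  set ε := min ε₀ (min (cX / 2) επ) with hεdef
  have hεpos : 0 < ε := lt_min hε₀ (lt_min (by linarith) hεπ)
  have hεle : ε ≤ ε₀ := min_le_left _ _
  have hεcX : ε ≤ cX / 2 := le_trans (min_le_right _ _) (min_le_left _ _)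
  have hεεπ : ε ≤ επ := le_trans (min_le_right _ _) (min_le_right _ _)
  obtain ⟨δb, hδb, hbr⟩ := hccε ε hεpos hεle
  refine ⟨δb, hδb, ?_⟩
  intro p hper z z' hz hz' hdist
  by_contra hne
  obtain ⟨N, hN, hNp⟩ := hper
  have hNZ : (0 : ℤ) < (N : ℤ) := by exact_mod_cast hN
  have hsz : ∀ (n : ℤ) (x : X), π ((F ^ n) x) = (f ^ n) (π x) := semiconj_perm_zpow F f π hsc
  -- every point of the fiber of p has a positive period that is a multiple of N
  have hperiod : ∀ x : X, π x = p → ∃ d : ℤ, 0 < d ∧ (F ^ (d * (N : ℤ))) x = x := by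
    intro x hx
    have hmap : Set.MapsTo (fun k : ℕ => (F ^ ((k : ℤ) * (N : ℤ))) x) Set.univ (π ⁻¹' {p}) := by
      intro k _
      have hmem : π ((F ^ ((k : ℤ) * (N : ℤ))) x) = p := by
        rw [hsz, hx]; exact perm_zpow_fixed_mul f hNp k
      simpa using hmem
    obtain ⟨a, -, b, -, hab, heq⟩ :=
      Set.infinite_univ.exists_ne_map_eq_of_mapsTo hmap (hfin p)
    rcases hab.lt_or_gt with hlt | hlt
    · refine ⟨(b : ℤ) - a, by omega, ?_⟩
      have hcan := perm_zpow_cancel F heq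
      rwa [show ((b : ℤ) * N - (a : ℤ) * N) = ((b : ℤ) - a) * N by ring] at hcan
    · refine ⟨(a : ℤ) - b, by omega, ?_⟩
      have hcan := perm_zpow_cancel F heq.symm
      rwa [show ((a : ℤ) * N - (b : ℤ) * N) = ((a : ℤ) - b) * N by ring] at hcan
  obtain ⟨d1, hd1, hz1⟩ := hperiod z hz
  obtain ⟨d2, hd2, hz2⟩ := hperiod z' hz'
  set P : ℤ := (d1 * (N : ℤ)) * (d2 * (N : ℤ)) with hPdef
  have hPpos : 0 < P := mul_pos (mul_pos hd1 hNZ) (mul_pos hd2 hNZ)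
  have hPz : (F ^ P) z = z := by
    have h := perm_zpow_fixed_mul F hz1 (d2 * (N : ℤ))
    rwa [show (d2 * (N : ℤ)) * (d1 * (N : ℤ)) = P by rw [hPdef]; ring] at h
  have hPz' : (F ^ P) z' = z' := perm_zpow_fixed_mul F hz2 (d1 * (N : ℤ))
  have hPp : (f ^ P) p = p := by
    have h := perm_zpow_fixed_mul f hNp (d1 * (N : ℤ) * d2)
    rwa [show (d1 * (N : ℤ) * d2) * (N : ℤ) = P by rw [hPdef]; ring] at h
  -- the bracket point
  obtain ⟨B, ⟨hBs, hBu⟩, -⟩ := hbr z z' hdist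
  -- π B = p
  have hπB : π B = p := by
    by_contra hBp
    obtain ⟨n, hn⟩ := hfe (π B) p hBp
    have hb : dist ((f ^ n) (π B)) ((f ^ n) p) < cY := by
      rcases le_or_gt 0 n with h0 | h0
      · have hnn : ((n.toNat : ℕ) : ℤ) = n := Int.toNat_of_nonneg h0
        have h1 := hBs n.toNat
        rw [hnn] at h1
        have h2 : dist (π ((F ^ n) B)) (π ((F ^ n) z)) < cY :=
          hπu (lt_of_lt_of_le (by rw [dist_comm]; exact h1) hεεπ)
        rw [hsz, hsz, hz] at h2
        exact h2
      · have hnn : -(((-n).toNat : ℕ) : ℤ) = n := by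
          rw [Int.toNat_of_nonneg (by linarith)]; ring
        have h1 := hBu (-n).toNat
        rw [hnn] at h1
        have h2 : dist (π ((F ^ n) B)) (π ((F ^ n) z')) < cY :=
          hπu (lt_of_lt_of_le (by rw [dist_comm]; exact h1) hεεπ)
        rw [hsz, hsz, hz'] at h2
        exact h2
    exact absurd hn (not_lt.mpr hb.le)
  -- key : B cannot be fixed by any positive multiple of P
  have key : ∀ c : ℤ, 0 < c → (F ^ (c * P)) B = B → False := by
    intro c hc hRB0
    set R : ℤ := c * P with hRdef
    have hR : 0 < R := mul_pos hc hPpos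
    have hRB : (F ^ R) B = B := hRB0
    have hzB : ∀ n : ℤ, dist ((F ^ n) z) ((F ^ n) B) < ε := by
      intro n
      set k : ℤ := ((n.natAbs + 1 : ℕ) : ℤ) with hkdef
      have hkpos : 0 < k := by positivity
      have hk0 : 0 ≤ n + k * R := by
        have h1 : -n ≤ (n.natAbs : ℤ) := by omega
        have hk1 : k ≤ k * R := le_mul_of_one_le_right hkpos.le hR
        have hk2 : (n.natAbs : ℤ) + 1 ≤ k := by omega
        linarith
      have hm : (((n + k * R).toNat : ℕ) : ℤ) = n + k * R := Int.toNat_of_nonneg hk0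
      have h1 := hBs (n + k * R).toNat
      rw [hm, perm_zpow_add_apply F n (k * R) z, perm_zpow_add_apply F n (k * R) B] at h1
      have hfzz : (F ^ (k * R)) z = z := by
        have h := perm_zpow_fixed_mul F hPz (k * c)
        rwa [show (k * c) * P = k * R by rw [hRdef]; ring] at h
      have hfBB : (F ^ (k * R)) B = B := perm_zpow_fixed_mul F hRB k
      rwa [hfzz, hfBB] at h1
    have hz'B : ∀ n : ℤ, dist ((F ^ n) z') ((F ^ n) B) < ε := by
      intro n
      set k : ℤ := ((n.natAbs + 1 : ℕ) : ℤ) with hkdef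
      have hkpos : 0 < k := by positivity
      have hk0 : 0 ≤ k * R - n := by
        have h1 : n ≤ (n.natAbs : ℤ) := by omega
        have hk1 : k ≤ k * R := le_mul_of_one_le_right hkpos.le hR
        have hk2 : (n.natAbs : ℤ) + 1 ≤ k := by omega
        linarith
      have hm : (((k * R - n).toNat : ℕ) : ℤ) = k * R - n := Int.toNat_of_nonneg hk0
      have h1 := hBu (k * R - n).toNat
      rw [hm, show -(k * R - n) = n + -(k * R) by ring,
        perm_zpow_add_apply F n (-(k * R)) z', perm_zpow_add_apply F n (-(k * R)) B] at h1
      have hfzz : (F ^ (-(k * R))) z' = z' := by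
        have h := perm_zpow_fixed_mul F hPz' (-(k * c))
        rwa [show (-(k * c)) * P = -(k * R) by rw [hRdef]; ring] at h
      have hfBB : (F ^ (-(k * R))) B = B := by
        have h := perm_zpow_fixed_mul F hRB (-k)
        rwa [show (-k : ℤ) * R = -(k * R) by ring] at h
      rwa [hfzz, hfBB] at h1
    obtain ⟨n, hn⟩ := hFe z z' hne
    have ht := dist_triangle ((F ^ n) z) ((F ^ n) B) ((F ^ n) z')
    have h1 := hzB n
    have h2 := hz'B n
    rw [dist_comm ((F ^ n) z') ((F ^ n) B)] at h2
    linarith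
  -- infinitely many preimages of p
  have hginj : Function.Injective (fun k : ℕ => (F ^ (-(k : ℤ) * P)) B) := by
    intro k1 k2 hkeq
    by_contra hkne
    simp only at hkeq
    have hcan := perm_zpow_cancel F hkeq
    rcases (show k1 < k2 ∨ k2 < k1 by omega) with h | h
    · have hc2 := perm_zpow_fixed_mul F hcan (-1)
      rw [show (-1 : ℤ) * (-(k2 : ℤ) * P - -(k1 : ℤ) * P) = ((k2 : ℤ) - k1) * P by ring] at hc2
      exact key ((k2 : ℤ) - k1) (by omega) hc2
    · rw [show (-(k2 : ℤ) * P - -(k1 : ℤ) * P) = ((k1 : ℤ) - k2) * P by ring] at hcan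
      exact key ((k1 : ℤ) - k2) (by omega) hcan
  have hmem : ∀ k : ℕ, (F ^ (-(k : ℤ) * P)) B ∈ π ⁻¹' {p} := by
    intro k
    have h : π ((F ^ (-(k : ℤ) * P)) B) = p := by
      rw [hsz, hπB]; exact perm_zpow_fixed_mul f hPp (-(k : ℤ))
    simpa using h
  exact (Set.infinite_of_injective_forall_mem hginj hmem) (hfin p)

/-- For a finite-to-one factor map `π` from a transitive Smale space to a
finitely presented system with minimal fiber cardinality `M`, there is a dense open set
`W ⊆ Y` in which every periodic point has exactly `M` preimages. -/
theorem stmt3 {X Y : Type*} [MetricSpace X] [CompactSpace X] [MetricSpace Y] [CompactSpace Y]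
    (F : Equiv.Perm X) (f : Equiv.Perm Y)
    (hX : IsSmale F) (hXt : TopTransitive F) (hY : FinitelyPresented f)
    (π : X → Y) (hπ : IsFactorMap F f π)
    (hfin : ∀ y : Y, (π ⁻¹' {y}).Finite)
    (M : ℕ) (hM : (∃ y : Y, (π ⁻¹' {y}).ncard = M) ∧ ∀ y : Y, M ≤ (π ⁻¹' {y}).ncard) :
    ∃ W : Set Y, IsOpen W ∧ Dense W ∧
      ∀ p ∈ W, IsPeriodicPoint f p → (π ⁻¹' {p}).ncard = M := by
  obtain ⟨hπc, hπs, hsc⟩ := hπ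
  obtain ⟨hfc, -, ⟨cY, hcY, hfe⟩, -⟩ := hY
  obtain ⟨-, -, ⟨cX, hcX, hFe⟩, hcc⟩ := hX
  obtain ⟨δb, hδb, hsep⟩ := fiber_sep F f π hπc hsc hfin hcX hFe hcY hfe hcc
  obtain ⟨⟨y₀, hy₀⟩, hmin⟩ := hM
  obtain ⟨δ, hδ, husc⟩ := fiber_usc π hπc y₀ (δb / 3) (by linarith)
  have hsz : ∀ (n : ℤ) (x : X), π ((F ^ n) x) = (f ^ n) (π x) := semiconj_perm_zpow F f π hsc
  refine ⟨⋃ n : ℕ, (⇑(f ^ (n : ℤ))) ⁻¹' Metric.ball y₀ δ,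
    isOpen_iUnion (fun n => Metric.isOpen_ball.preimage (perm_pow_continuous f hfc n)), ?_, ?_⟩
  · rw [dense_iff_inter_open]
    intro V hV hVne
    obtain ⟨v, hv⟩ := hVne
    obtain ⟨xv, hxv⟩ := hπs v
    obtain ⟨xb, hxb⟩ := hπs y₀
    obtain ⟨n, x, hx1, hx2⟩ := hXt (π ⁻¹' Metric.ball y₀ δ) (π ⁻¹' V)
      (Metric.isOpen_ball.preimage hπc) (hV.preimage hπc)
      ⟨xb, by simp [Set.mem_preimage, hxb, Metric.mem_ball_self hδ]⟩
      ⟨xv, by simp [Set.mem_preimage, hxv, hv]⟩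
    refine ⟨π x, hx2, Set.mem_iUnion.mpr ⟨n, ?_⟩⟩
    have hb : π ((F ^ (n : ℤ)) x) ∈ Metric.ball y₀ δ := hx1
    rw [hsz] at hb
    exact hb
  · intro p hp hper
    obtain ⟨n, hn⟩ := Set.mem_iUnion.mp hp
    have hqB : dist ((f ^ (n : ℤ)) p) y₀ < δ := by
      have hb : (f ^ (n : ℤ)) p ∈ Metric.ball y₀ δ := hn
      simpa [Metric.mem_ball] using hb
    obtain ⟨N, hN, hNp⟩ := hper
    have hqper : IsPeriodicPoint f ((f ^ (n : ℤ)) p) := by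
      refine ⟨N, hN, ?_⟩
      rw [← perm_zpow_add_apply, add_comm, perm_zpow_add_apply, hNp]
    have himg : π ⁻¹' {(f ^ (n : ℤ)) p} = (⇑(F ^ (n : ℤ))) '' (π ⁻¹' {p}) := by
      ext x
      simp only [Set.mem_preimage, Set.mem_singleton_iff, Set.mem_image]
      constructor
      · intro hx
        refine ⟨(F ^ (-(n : ℤ))) x, ?_, ?_⟩
        · rw [hsz, hx, ← perm_zpow_add_apply, show (-(n : ℤ) + n) = 0 by ring]
          simp
        · rw [← perm_zpow_add_apply, show ((n : ℤ) + -(n : ℤ)) = 0 by ring]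
          simp
      · rintro ⟨w, hw, rfl⟩
        rw [hsz, hw]
    have hcard : (π ⁻¹' {(f ^ (n : ℤ)) p}).ncard = (π ⁻¹' {p}).ncard := by
      rw [himg, Set.ncard_image_of_injective _ (Equiv.injective _)]
    have sel : ∀ x ∈ π ⁻¹' {(f ^ (n : ℤ)) p}, ∃ x₀, π x₀ = y₀ ∧ dist x x₀ < δb / 3 := by
      intro x hx
      exact husc _ hqB x (by simpa using hx)
    choose g hg1 hg2 using sel
    have hub : (π ⁻¹' {(f ^ (n : ℤ)) p}).ncard ≤ M := by
      classical
      rw [← hy₀]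
      refine Set.ncard_le_ncard_of_injOn
        (fun x => if hx : x ∈ π ⁻¹' {(f ^ (n : ℤ)) p} then g x hx else x) ?_ ?_ (hfin y₀)
      · intro a ha
        simp only [dif_pos ha]
        simpa using hg1 a ha
      · intro a ha b hb hab
        simp only [dif_pos ha, dif_pos hb] at hab
        have hπa : π a = (f ^ (n : ℤ)) p := by simpa using ha
        have hπb : π b = (f ^ (n : ℤ)) p := by simpa using hb
        refine hsep _ hqper a b hπa hπb ?_
        have h3 : dist (g a ha) b = dist b (g b hb) := by rw [hab, dist_comm]
        have h4 := dist_triangle a (g a ha) b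
        have h5 := hg2 a ha
        have h6 := hg2 b hb
        linarith
    have hlb := hmin p
    omega
end

section
/- Let (X,F) be a transitive Smale space, (Y,f) a Smale space, and π : X → Y a factor map. Then π is u-resolving (injective on unstable sets) if and only if π is u-bijective (restricts to a bijection from W^u(x) onto W^u(π(x)) for every x ∈ X). -/
open Filter Topology Set

/-! ### Auxiliary development -/

set_option linter.unusedSectionVars false
set_option maxHeartbeats 1000000

namespace Stmt8Aux

variable {X : Type*} [MetricSpace X]

lemma zpow_apply_add (F : Equiv.Perm X) (a b : ℤ) (x : X) :
    (F ^ (a + b)) x = (F ^ a) ((F ^ b) x) := by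
  rw [zpow_add]; rfl

lemma continuous_zpow (F : Equiv.Perm X) (hF : Continuous F) (hF' : Continuous F.symm)
    (n : ℤ) : Continuous fun x => (F ^ n) x := by
  have hnat : ∀ m : ℕ, Continuous fun x => (F ^ (m:ℤ)) x := by
    intro m
    induction m with
    | zero => simpa using continuous_id'
    | succ k ih =>
      have : (fun x => (F ^ ((k:ℤ)+1)) x) = (fun x => F ((F ^ (k:ℤ)) x)) := by
        funext x
        rw [add_comm, zpow_apply_add]; simp
      push_cast
      rw [this]
      exact hF.comp ih
  have hnat' : ∀ m : ℕ, Continuous fun x => (F ^ (-(m:ℤ))) x := by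
    intro m
    induction m with
    | zero => simpa using continuous_id'
    | succ k ih =>
      have : (fun x => (F ^ (-((k:ℤ)+1))) x) = (fun x => F.symm ((F ^ (-(k:ℤ))) x)) := by
        funext x
        have h : (-((k:ℤ)+1)) = (-1) + (-(k:ℤ)) := by ring
        rw [h, zpow_apply_add]
        simp [Equiv.Perm.inv_def]
      push_cast
      rw [this]
      exact hF'.comp ih
  rcases le_or_gt 0 n with h | h
  · obtain ⟨m, rfl⟩ := Int.eq_ofNat_of_zero_le h
    exact hnat m
  · obtain ⟨m, rfl⟩ : ∃ m : ℕ, n = -(m:ℤ) := ⟨n.natAbs, by omega⟩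
    exact hnat' m

/-- Sequential compactness for a pair of sequences. -/
lemma pair_subseq [CompactSpace X] {Z : Type*} [MetricSpace Z] [CompactSpace Z]
    (u : ℕ → X) (v : ℕ → Z) :
    ∃ (a : X) (b : Z) (φ : ℕ → ℕ), StrictMono φ ∧
      Tendsto (u ∘ φ) atTop (𝓝 a) ∧ Tendsto (v ∘ φ) atTop (𝓝 b) := by
  obtain ⟨a, -, φ, hφ, hu⟩ := isCompact_univ.tendsto_subseq (x := u) (fun n => mem_univ _)
  obtain ⟨b, -, ψ, hψ, hv⟩ := isCompact_univ.tendsto_subseq (x := v ∘ φ) (fun n => mem_univ _)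
  exact ⟨a, b, φ ∘ ψ, hφ.comp hψ, hu.comp hψ.tendsto_atTop, hv⟩

/-- Expansivity rigidity. -/
lemma eq_of_orbits_close {F : Equiv.Perm X} {c : ℝ} (hc : Expansive F c) {ε : ℝ}
    (hε : ε < c) {x y : X} (h : ∀ n : ℤ, dist ((F ^ n) x) ((F ^ n) y) ≤ ε) : x = y := by
  by_contra hne
  obtain ⟨n, hn⟩ := hc x y hne
  exact absurd (h n) (by linarith)

lemma tendsto_dist_zero_iff (u : ℕ → ℝ) (hu : ∀ n, 0 ≤ u n) :
    Tendsto u atTop (𝓝 (0:ℝ)) ↔ ∀ ε > (0:ℝ), ∃ N, ∀ n ≥ N, u n < ε := by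
  rw [Metric.tendsto_atTop]
  constructor
  · intro h ε hε
    obtain ⟨N, hN⟩ := h ε hε
    exact ⟨N, fun n hn => by
      have := hN n hn
      rwa [Real.dist_eq, sub_zero, abs_of_nonneg (hu n)] at this⟩
  · intro h ε hε
    obtain ⟨N, hN⟩ := h ε hε
    exact ⟨N, fun n hn => by
      rw [Real.dist_eq, sub_zero, abs_of_nonneg (hu n)]
      exact hN n hn⟩

/-- L2: uniform backward contraction. -/
lemma uniform_backward_contraction [CompactSpace X] (F : Equiv.Perm X)
    (hF : Continuous F) (hF' : Continuous F.symm)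
    {c : ℝ} (hc : Expansive F c) {ε : ℝ} (hε : ε < c) {γ : ℝ} (hγ : 0 < γ) :
    ∃ N : ℕ, ∀ x y : X, (∀ n : ℕ, dist ((F ^ (-(n:ℤ))) x) ((F ^ (-(n:ℤ))) y) ≤ ε) →
      ∀ n : ℕ, N ≤ n → dist ((F ^ (-(n:ℤ))) x) ((F ^ (-(n:ℤ))) y) ≤ γ := by
  by_contra hcon
  push_neg at hcon
  choose x y hctrl n hn hbig using hcon
  set a : ℕ → X := fun N => (F ^ (-(n N:ℤ))) (x N) with ha
  set b : ℕ → X := fun N => (F ^ (-(n N:ℤ))) (y N) with hb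
  obtain ⟨p, q, φ, hφ, hp, hq⟩ := pair_subseq a b
  have key : ∀ i : ℤ, dist ((F ^ i) p) ((F ^ i) q) ≤ ε := by
    intro i
    have hseq : Tendsto (fun k => dist ((F ^ i) (a (φ k))) ((F ^ i) (b (φ k)))) atTop
        (𝓝 (dist ((F ^ i) p) ((F ^ i) q))) := by
      have h1 : Tendsto (fun k => (F ^ i) (a (φ k))) atTop (𝓝 ((F ^ i) p)) :=
        ((continuous_zpow F hF hF' i).tendsto p).comp hp
      have h2 : Tendsto (fun k => (F ^ i) (b (φ k))) atTop (𝓝 ((F ^ i) q)) :=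
        ((continuous_zpow F hF hF' i).tendsto q).comp hq
      exact h1.dist h2
    refine le_of_tendsto hseq ?_
    filter_upwards [eventually_ge_atTop i.toNat] with k hk
    have hik : i ≤ (n (φ k) : ℤ) := by
      have h1 : (k:ℤ) ≤ (φ k : ℤ) := by exact_mod_cast hφ.le_apply
      have h2 : (φ k : ℤ) ≤ (n (φ k) : ℤ) := by exact_mod_cast hn (φ k)
      have h3 : i ≤ (k : ℤ) := le_trans (Int.self_le_toNat i) (by exact_mod_cast hk)
      omega
    set m : ℕ := ((n (φ k) : ℤ) - i).toNat with hm
    have hmz : -(m:ℤ) = i - (n (φ k) : ℤ) := by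
      rw [hm, Int.toNat_of_nonneg (by omega)]; ring
    have e1 : (F ^ i) (a (φ k)) = (F ^ (-(m:ℤ))) (x (φ k)) := by
      rw [ha]
      simp only []
      rw [← zpow_apply_add, hmz, sub_eq_add_neg]
    have e2 : (F ^ i) (b (φ k)) = (F ^ (-(m:ℤ))) (y (φ k)) := by
      rw [hb]
      simp only []
      rw [← zpow_apply_add, hmz, sub_eq_add_neg]
    rw [e1, e2]
    exact hctrl (φ k) m
  have hpq : p = q := eq_of_orbits_close hc hε key
  have hlim : Tendsto (fun k => dist (a (φ k)) (b (φ k))) atTop (𝓝 (dist p q)) := hp.dist hq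
  have : γ ≤ dist p q := by
    refine ge_of_tendsto hlim ?_
    filter_upwards with k
    exact (hbig (φ k)).le
  rw [hpq, dist_self] at this
  linarith

/-! ### Closed stable/unstable sets -/

/-- Closed version of `Ws`. -/
def cloWs (F : Equiv.Perm X) (ε : ℝ) (x : X) : Set X :=
  {y | ∀ n : ℕ, dist ((F ^ (n : ℤ)) x) ((F ^ (n : ℤ)) y) ≤ ε}

/-- Closed version of `Wu`. -/
def cloWu (F : Equiv.Perm X) (ε : ℝ) (x : X) : Set X :=
  {y | ∀ n : ℕ, dist ((F ^ (-(n : ℤ))) x) ((F ^ (-(n : ℤ))) y) ≤ ε}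

lemma Ws_subset_cloWs {F : Equiv.Perm X} {ε : ℝ} {x : X} : Ws F ε x ⊆ cloWs F ε x :=
  fun _ h n => (h n).le

lemma Wu_subset_cloWu {F : Equiv.Perm X} {ε : ℝ} {x : X} : Wu F ε x ⊆ cloWu F ε x :=
  fun _ h n => (h n).le

lemma cloWs_subset_Ws {F : Equiv.Perm X} {ε ε' : ℝ} (h : ε < ε') {x : X} :
    cloWs F ε x ⊆ Ws F ε' x := fun _ hy n => lt_of_le_of_lt (hy n) h

lemma cloWu_subset_Wu {F : Equiv.Perm X} {ε ε' : ℝ} (h : ε < ε') {x : X} :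
    cloWu F ε x ⊆ Wu F ε' x := fun _ hy n => lt_of_le_of_lt (hy n) h

lemma cloWs_mono {F : Equiv.Perm X} {ε ε' : ℝ} (h : ε ≤ ε') {x : X} :
    cloWs F ε x ⊆ cloWs F ε' x := fun _ hy n => le_trans (hy n) h

lemma cloWu_mono {F : Equiv.Perm X} {ε ε' : ℝ} (h : ε ≤ ε') {x : X} :
    cloWu F ε x ⊆ cloWu F ε' x := fun _ hy n => le_trans (hy n) h

lemma cloWs_symm {F : Equiv.Perm X} {ε : ℝ} {x y : X} (h : y ∈ cloWs F ε x) :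
    x ∈ cloWs F ε y := fun n => by rw [dist_comm]; exact h n

lemma mem_unstableSet_iff {F : Equiv.Perm X} {x z : X} :
    z ∈ unstableSet F x ↔
      ∀ ε > (0:ℝ), ∃ N : ℕ, ∀ n ≥ N, dist ((F ^ (-(n:ℤ))) x) ((F ^ (-(n:ℤ))) z) < ε := by
  exact tendsto_dist_zero_iff _ (fun n => dist_nonneg)

lemma unstableSet_refl {F : Equiv.Perm X} (x : X) : x ∈ unstableSet F x := by
  rw [mem_unstableSet_iff]
  intro ε hε
  exact ⟨0, fun n _ => by rw [dist_self]; exact hε⟩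

lemma cloWu_subset_unstableSet [CompactSpace X] {F : Equiv.Perm X}
    (hF : Continuous F) (hF' : Continuous F.symm)
    {c : ℝ} (hc : Expansive F c) {ε : ℝ} (hε : ε < c) {x : X} :
    cloWu F ε x ⊆ unstableSet F x := by
  intro z hz
  rw [mem_unstableSet_iff]
  intro γ hγ
  obtain ⟨N, hN⟩ := uniform_backward_contraction F hF hF' hc hε (half_pos hγ)
  exact ⟨N, fun n hn => lt_of_le_of_lt (hN x z hz n hn) (half_lt_self hγ)⟩

lemma unstableSet_shift [CompactSpace X] {F : Equiv.Perm X} {w z : X} (j : ℤ)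
    (h : z ∈ unstableSet F w) : (F ^ j) z ∈ unstableSet F ((F ^ j) w) := by
  rw [mem_unstableSet_iff] at h ⊢
  intro ε hε
  obtain ⟨N, hN⟩ := h ε hε
  refine ⟨N + j.toNat, fun n hn => ?_⟩
  have hjn : j ≤ (n:ℤ) := le_trans (Int.self_le_toNat j) (by
    have : j.toNat ≤ n := le_trans (Nat.le_add_left _ _) hn
    exact_mod_cast this)
  set m : ℕ := ((n:ℤ) - j).toNat with hm
  have hmz : -(m:ℤ) = j - (n:ℤ) := by
    rw [hm, Int.toNat_of_nonneg (by omega)]; ring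
  have e1 : (F ^ (-(n:ℤ))) ((F ^ j) w) = (F ^ (-(m:ℤ))) w := by
    rw [← zpow_apply_add, hmz]
    congr 2
    ring
  have e2 : (F ^ (-(n:ℤ))) ((F ^ j) z) = (F ^ (-(m:ℤ))) z := by
    rw [← zpow_apply_add, hmz]
    congr 2
    ring
  rw [e1, e2]
  refine hN m ?_
  have : (N:ℤ) ≤ (m:ℤ) := by
    rw [hm, Int.toNat_of_nonneg (by omega)]
    have h1 : (N:ℤ) + j.toNat ≤ (n:ℤ) := by exact_mod_cast hn
    have h2 : j ≤ (j.toNat : ℤ) := Int.self_le_toNat j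
    omega
  exact_mod_cast this

/-! ### Factor map basics -/

variable {Y : Type*} [MetricSpace Y]

lemma commute_zpow {F : Equiv.Perm X} {f : Equiv.Perm Y} {π : X → Y}
    (hcom : ∀ x, π (F x) = f (π x)) : ∀ (n : ℤ) (x : X), π ((F ^ n) x) = (f ^ n) (π x) := by
  have hnat : ∀ (m : ℕ) (x : X), π ((F ^ (m:ℤ)) x) = (f ^ (m:ℤ)) (π x) := by
    intro m
    induction m with
    | zero => intro x; simp
    | succ k ih =>
      intro x
      have e : ((k:ℤ)+1) = 1 + (k:ℤ) := by ring
      push_cast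
      rw [e, zpow_apply_add, zpow_apply_add]
      simp only [zpow_one]
      rw [hcom, ih]
  have hneg : ∀ (m : ℕ) (x : X), π ((F ^ (-(m:ℤ))) x) = (f ^ (-(m:ℤ))) (π x) := by
    intro m x
    have hfinj : Function.Injective (f ^ (m:ℤ)) := (f ^ (m:ℤ)).injective
    apply hfinj
    rw [← hnat m ((F ^ (-(m:ℤ))) x), ← zpow_apply_add, ← zpow_apply_add, add_neg_cancel]
    simp
  intro n x
  rcases le_or_gt 0 n with h | h
  · obtain ⟨m, rfl⟩ := Int.eq_ofNat_of_zero_le h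
    exact hnat m x
  · obtain ⟨m, rfl⟩ : ∃ m : ℕ, n = -(m:ℤ) := ⟨n.natAbs, by omega⟩
    exact hneg m x

/-- A `≤`-modulus of uniform continuity. -/
lemma exists_modulus [CompactSpace X] {g : X → Y} (hg : Continuous g) {e : ℝ} (he : 0 < e) :
    ∃ d > 0, ∀ p q : X, dist p q ≤ d → dist (g p) (g q) ≤ e := by
  have := CompactSpace.uniformContinuous_of_continuous hg
  rw [Metric.uniformContinuous_iff] at this
  obtain ⟨δ, hδ, hδ'⟩ := this e he
  exact ⟨δ/2, half_pos hδ, fun p q h => (hδ' (lt_of_le_of_lt h (half_lt_self hδ))).le⟩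

lemma image_cloWs {F : Equiv.Perm X} {f : Equiv.Perm Y} {π : X → Y}
    (hcom : ∀ x, π (F x) = f (π x)) {d e : ℝ}
    (hmod : ∀ p q : X, dist p q ≤ d → dist (π p) (π q) ≤ e)
    {x z : X} (h : z ∈ Stmt8Aux.cloWs F d x) : π z ∈ Stmt8Aux.cloWs f e (π x) := by
  intro n
  rw [← commute_zpow hcom, ← commute_zpow hcom]
  exact hmod _ _ (h n)

lemma image_cloWu {F : Equiv.Perm X} {f : Equiv.Perm Y} {π : X → Y}
    (hcom : ∀ x, π (F x) = f (π x)) {d e : ℝ}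
    (hmod : ∀ p q : X, dist p q ≤ d → dist (π p) (π q) ≤ e)
    {x z : X} (h : z ∈ Stmt8Aux.cloWu F d x) : π z ∈ Stmt8Aux.cloWu f e (π x) := by
  intro n
  rw [← commute_zpow hcom, ← commute_zpow hcom]
  exact hmod _ _ (h n)

/-- Claim U: uniform injectivity of a u-resolving map along unstable sets. -/
lemma claimU [CompactSpace X] {F : Equiv.Perm X} {f : Equiv.Perm Y} {π : X → Y}
    (hF : Continuous F) (hF' : Continuous F.symm) (hπ : Continuous π)
    (hcom : ∀ x, π (F x) = f (π x))
    {c : ℝ} (hc : Expansive F c) (hres : UResolving F π)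
    {B : ℝ} (hB : B < c) {ρ : ℝ} (hρ : 0 < ρ) :
    ∃ γ > 0, ∀ a b : X, b ∈ cloWu F B a →
      (∀ n : ℕ, dist ((f ^ (-(n:ℤ))) (π a)) ((f ^ (-(n:ℤ))) (π b)) ≤ γ) →
      dist a b ≤ ρ := by
  by_contra hcon
  push_neg at hcon
  have hcon' : ∀ k : ℕ, ∃ a b : X, b ∈ cloWu F B a ∧
      (∀ n : ℕ, dist ((f ^ (-(n:ℤ))) (π a)) ((f ^ (-(n:ℤ))) (π b)) ≤ 1/((k:ℝ)+1)) ∧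
      ρ < dist a b := by
    intro k
    obtain ⟨a, b, h1, h2, h3⟩ := hcon (1/((k:ℝ)+1)) (by positivity)
    exact ⟨a, b, h1, h2, h3⟩
  choose a b hmem himg hbig using hcon'
  obtain ⟨p, q, φ, hφ, hp, hq⟩ := pair_subseq a b
  have hq_mem : q ∈ cloWu F B p := by
    intro n
    have hseq : Tendsto (fun k => dist ((F ^ (-(n:ℤ))) (a (φ k))) ((F ^ (-(n:ℤ))) (b (φ k))))
        atTop (𝓝 (dist ((F ^ (-(n:ℤ))) p) ((F ^ (-(n:ℤ))) q))) :=
      (((continuous_zpow F hF hF' _).tendsto p).comp hp).dist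
        (((continuous_zpow F hF hF' _).tendsto q).comp hq)
    refine le_of_tendsto hseq ?_
    filter_upwards with k
    exact hmem (φ k) n
  have hπeq : π p = π q := by
    have hseq : Tendsto (fun k => dist (π (a (φ k))) (π (b (φ k)))) atTop
        (𝓝 (dist (π p) (π q))) :=
      ((hπ.tendsto p).comp hp).dist ((hπ.tendsto q).comp hq)
    have hle : ∀ t > (0:ℝ), dist (π p) (π q) ≤ t := by
      intro t ht
      refine le_of_tendsto hseq ?_
      obtain ⟨K, hK⟩ := exists_nat_gt (1/t)
      filter_upwards [eventually_ge_atTop K] with k hk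
      have h1 := himg (φ k) 0
      simp only [Nat.cast_zero, neg_zero, zpow_zero] at h1
      simp only [Equiv.Perm.coe_one, id_eq] at h1
      refine le_trans h1 ?_
      have hφk : (K:ℝ) ≤ ((φ k : ℕ):ℝ) := by
        have := le_trans hk hφ.le_apply
        exact_mod_cast this
      rw [div_le_iff₀ (by positivity)]
      rw [div_lt_iff₀ ht] at hK
      nlinarith [hK, ht.le]
    have hle0 : dist (π p) (π q) ≤ 0 := by
      by_contra hcon2
      push_neg at hcon2
      linarith [hle (dist (π p) (π q) / 2) (by linarith)]
    exact dist_le_zero.mp hle0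
  have hq_un : q ∈ unstableSet F p := cloWu_subset_unstableSet hF hF' hc hB hq_mem
  have hp_un : p ∈ unstableSet F p := unstableSet_refl p
  have : p = q := (hres p) hp_un hq_un hπeq
  have hlim : Tendsto (fun k => dist (a (φ k)) (b (φ k))) atTop (𝓝 (dist p q)) := hp.dist hq
  have hge : ρ ≤ dist p q := ge_of_tendsto hlim (by filter_upwards with k; exact (hbig (φ k)).le)
  rw [this, dist_self] at hge
  linarith

/-- Push lemma: pushing a local unstable lift forward, using Claim U. -/
lemma push_lemma {F : Equiv.Perm X} {f : Equiv.Perm Y} {π : X → Y}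
    (hcom : ∀ x, π (F x) = f (π x))
    {E B α γU : ℝ}
    (hmodF : ∀ p q : X, dist p q ≤ E → dist (F p) (F q) ≤ B)
    (hEB : E ≤ B) (hαγ : α ≤ γU)
    (hU : ∀ a b : X, b ∈ cloWu F B a →
      (∀ n : ℕ, dist ((f ^ (-(n:ℤ))) (π a)) ((f ^ (-(n:ℤ))) (π b)) ≤ γU) → dist a b ≤ E)
    (w z : X) (j : ℕ) (hz : z ∈ cloWu F E w)
    (himg : ∀ n : ℕ, dist ((f ^ (-(n:ℤ))) (π ((F ^ (j:ℤ)) w)))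
      ((f ^ (-(n:ℤ))) (π ((F ^ (j:ℤ)) z))) ≤ α) :
    ∀ i : ℕ, i ≤ j → (F ^ (i:ℤ)) z ∈ cloWu F E ((F ^ (i:ℤ)) w) := by
  -- image control at every intermediate time
  have himg' : ∀ i : ℕ, i ≤ j → ∀ n : ℕ,
      dist ((f ^ (-(n:ℤ))) (π ((F ^ (i:ℤ)) w))) ((f ^ (-(n:ℤ))) (π ((F ^ (i:ℤ)) z))) ≤ α := by
    intro i hij n
    have key : ∀ v : X, (f ^ (-(n:ℤ))) (π ((F ^ (i:ℤ)) v))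
        = (f ^ (-(((n + (j - i) : ℕ)):ℤ))) (π ((F ^ (j:ℤ)) v)) := by
      intro v
      rw [commute_zpow hcom, commute_zpow hcom, ← zpow_apply_add, ← zpow_apply_add]
      congr 2
      push_cast [Nat.cast_sub hij]
      ring
    rw [key w, key z]
    exact himg (n + (j - i))
  intro i
  induction i with
  | zero => intro _; simpa using hz
  | succ k ih =>
    intro hkj
    have hk : k ≤ j := by omega
    have A := ih hk
    -- candidate control at scale B
    have hBmem : (F ^ ((k+1 : ℕ):ℤ)) z ∈ cloWu F B ((F ^ ((k+1:ℕ):ℤ)) w) := by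
      intro n
      match n with
      | 0 =>
        simp only [Nat.cast_zero, neg_zero, zpow_zero, Equiv.Perm.coe_one, id_eq]
        have e : ∀ v : X, (F ^ ((k+1:ℕ):ℤ)) v = F ((F ^ ((k:ℕ):ℤ)) v) := by
          intro v
          have : ((k+1:ℕ):ℤ) = 1 + ((k:ℕ):ℤ) := by push_cast; ring
          rw [this, zpow_apply_add, zpow_one]
        rw [e w, e z]
        have h0 := A 0
        simp only [Nat.cast_zero, neg_zero, zpow_zero, Equiv.Perm.coe_one, id_eq] at h0
        exact hmodF _ _ h0
      | (m+1 : ℕ) =>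
        have e : ∀ v : X, (F ^ (-(((m+1:ℕ)):ℤ))) ((F ^ ((k+1:ℕ):ℤ)) v)
            = (F ^ (-((m:ℕ):ℤ))) ((F ^ ((k:ℕ):ℤ)) v) := by
          intro v
          rw [← zpow_apply_add, ← zpow_apply_add]
          congr 2
          push_cast
          ring
        rw [e w, e z]
        exact le_trans (A m) hEB
    -- image control for the candidate
    have himgc := himg' (k+1) hkj
    -- apply Claim U to refine head
    have hhead : dist ((F ^ ((k+1:ℕ):ℤ)) w) ((F ^ ((k+1:ℕ):ℤ)) z) ≤ E := by
      refine hU _ _ hBmem ?_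
      intro n
      exact le_trans (himgc n) hαγ
    -- full E-control
    intro n
    match n with
    | 0 =>
      simpa using hhead
    | (m+1 : ℕ) =>
      have e : ∀ v : X, (F ^ (-(((m+1:ℕ)):ℤ))) ((F ^ ((k+1:ℕ):ℤ)) v)
          = (F ^ (-((m:ℕ):ℤ))) ((F ^ ((k:ℕ):ℤ)) v) := by
        intro v
        rw [← zpow_apply_add, ← zpow_apply_add]
        congr 2
        push_cast
        ring
      rw [e w, e z]
      exact A m

/-! ### Bracket lemmas -/

/-- Uniqueness of points in a stable/unstable intersection. -/
lemma bracket_unique {f : Equiv.Perm Y} {s δ : ℝ}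
    (H : ∀ u v : Y, dist u v < δ → ∃! z, z ∈ Ws f s u ∩ Wu f s v)
    {u v p p' : Y} (huv : dist u v < δ)
    (hp : p ∈ Ws f s u ∩ Wu f s v) (hp' : p' ∈ Ws f s u ∩ Wu f s v) : p = p' := by
  obtain ⟨z, _, huniq⟩ := H u v huv
  rw [huniq p hp, huniq p' hp']

/-- Bracket-diagonal continuity: a point jointly stable/unstable-related to two
nearby points is close to them. -/
lemma bracket_diag [CompactSpace Y] (f : Equiv.Perm Y) (hf : Continuous f)
    (hf' : Continuous f.symm) {c : ℝ} (hc : Expansive f c) {e : ℝ} (he : e < c)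
    {ρ : ℝ} (hρ : 0 < ρ) :
    ∃ γ > 0, ∀ u v w : Y, dist u v ≤ γ → w ∈ cloWs f e u → w ∈ cloWu f e v →
      dist w v ≤ ρ := by
  by_contra hcon
  push_neg at hcon
  have hcon' : ∀ k : ℕ, ∃ u v w : Y, dist u v ≤ 1/((k:ℝ)+1) ∧ w ∈ cloWs f e u ∧
      w ∈ cloWu f e v ∧ ρ < dist w v := by
    intro k
    obtain ⟨u, v, w, h1, h2, h3, h4⟩ := hcon (1/((k:ℝ)+1)) (by positivity)
    exact ⟨u, v, w, h1, h2, h3, h4⟩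
  choose u v w hd hs hu hbig using hcon'
  obtain ⟨u0, v0, φ, hφ, hpu, hpv⟩ := pair_subseq u v
  obtain ⟨w0, -, ψ, hψ, hpw⟩ := isCompact_univ.tendsto_subseq (x := w ∘ φ) (fun n => mem_univ _)
  have hpu' : Tendsto (u ∘ (φ ∘ ψ)) atTop (𝓝 u0) := hpu.comp hψ.tendsto_atTop
  have hpv' : Tendsto (v ∘ (φ ∘ ψ)) atTop (𝓝 v0) := hpv.comp hψ.tendsto_atTop
  have huv : u0 = v0 := by
    have hlim : Tendsto (fun k => dist (u (φ (ψ k))) (v (φ (ψ k)))) atTop (𝓝 (dist u0 v0)) :=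
      hpu'.dist hpv'
    have hle : ∀ t > (0:ℝ), dist u0 v0 ≤ t := by
      intro t ht
      refine le_of_tendsto hlim ?_
      obtain ⟨K, hK⟩ := exists_nat_gt (1/t)
      filter_upwards [eventually_ge_atTop K] with k hk
      refine le_trans (hd (φ (ψ k))) ?_
      have h1 : (K:ℝ) ≤ ((φ (ψ k) : ℕ):ℝ) := by
        exact_mod_cast le_trans hk (le_trans (hψ.le_apply) (hφ.le_apply))
      rw [div_le_iff₀ (by positivity)]
      rw [div_lt_iff₀ ht] at hK
      nlinarith [ht.le]
    have hle0 : dist u0 v0 ≤ 0 := by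
      by_contra hcon2
      push_neg at hcon2
      linarith [hle (dist u0 v0 / 2) (by linarith)]
    exact dist_le_zero.mp hle0
  have hws : w0 ∈ cloWs f e u0 := by
    intro n
    have hlim : Tendsto (fun k => dist ((f ^ (n:ℤ)) (u (φ (ψ k)))) ((f ^ (n:ℤ)) (w (φ (ψ k)))))
        atTop (𝓝 (dist ((f ^ (n:ℤ)) u0) ((f ^ (n:ℤ)) w0))) :=
      (((continuous_zpow f hf hf' _).tendsto u0).comp hpu').dist
        (((continuous_zpow f hf hf' _).tendsto w0).comp hpw)
    exact le_of_tendsto hlim (by filter_upwards with k; exact hs (φ (ψ k)) n)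
  have hwu : w0 ∈ cloWu f e v0 := by
    intro n
    have hlim : Tendsto (fun k => dist ((f ^ (-(n:ℤ))) (v (φ (ψ k)))) ((f ^ (-(n:ℤ))) (w (φ (ψ k)))))
        atTop (𝓝 (dist ((f ^ (-(n:ℤ))) v0) ((f ^ (-(n:ℤ))) w0))) :=
      (((continuous_zpow f hf hf' _).tendsto v0).comp hpv').dist
        (((continuous_zpow f hf hf' _).tendsto w0).comp hpw)
    exact le_of_tendsto hlim (by filter_upwards with k; exact hu (φ (ψ k)) n)
  have hall : ∀ i : ℤ, dist ((f ^ i) v0) ((f ^ i) w0) ≤ e := by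
    intro i
    rcases le_or_gt 0 i with h | h
    · obtain ⟨m, rfl⟩ := Int.eq_ofNat_of_zero_le h
      rw [← huv]
      exact hws m
    · obtain ⟨m, rfl⟩ : ∃ m : ℕ, i = -(m:ℤ) := ⟨i.natAbs, by omega⟩
      exact hwu m
  have : v0 = w0 := eq_of_orbits_close hc he hall
  have hlim2 : Tendsto (fun k => dist (w (φ (ψ k))) (v (φ (ψ k)))) atTop (𝓝 (dist w0 v0)) :=
    hpw.dist hpv'
  have : ρ ≤ dist w0 v0 :=
    ge_of_tendsto hlim2 (by filter_upwards with k; exact (hbig (φ (ψ k))).le)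
  rw [← ‹v0 = w0›, dist_self] at this
  linarith

/-! ### Fiber semicontinuity -/

/-- Pointwise upper semicontinuity of fibers of a continuous map on a compact space. -/
lemma fiber_usc [CompactSpace X] {π : X → Y} (hπ : Continuous π) (y : Y)
    {ρ : ℝ} (hρ : 0 < ρ) :
    ∃ γ > 0, ∀ w z, dist w y < γ → π z = w → ∃ u, π u = y ∧ dist z u ≤ ρ := by
  by_contra hcon
  push_neg at hcon
  have hcon' : ∀ k : ℕ, ∃ w z, dist w y < 1/((k:ℝ)+1) ∧ π z = w ∧
      ∀ u, π u = y → ρ < dist z u := by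
    intro k
    obtain ⟨w, z, h1, h2, h3⟩ := hcon (1/((k:ℝ)+1)) (by positivity)
    exact ⟨w, z, h1, h2, fun u hu => h3 u hu⟩
  choose w z hd hz hbad using hcon'
  obtain ⟨z0, -, φ, hφ, hpz⟩ := isCompact_univ.tendsto_subseq (x := z) (fun n => mem_univ _)
  have hπz0 : π z0 = y := by
    have h1 : Tendsto (fun k => π (z (φ k))) atTop (𝓝 (π z0)) := (hπ.tendsto z0).comp hpz
    have h2 : Tendsto (fun k => π (z (φ k))) atTop (𝓝 y) := by
      rw [tendsto_iff_dist_tendsto_zero]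
      have hsq : ∀ k : ℕ, dist (π (z (φ k))) y ≤ 1/((k:ℝ)+1) := by
        intro k
        rw [hz (φ k)]
        refine le_trans (hd (φ k)).le ?_
        have hkk : k ≤ φ k := hφ.le_apply
        have : ((k:ℝ)+1) ≤ ((φ k : ℕ):ℝ) + 1 := by
          have : (k:ℝ) ≤ ((φ k : ℕ):ℝ) := by exact_mod_cast hkk
          linarith
        apply div_le_div_of_nonneg_left (by norm_num) (by positivity) this
      refine squeeze_zero (fun k => dist_nonneg) hsq ?_
      exact tendsto_one_div_add_atTop_nhds_zero_nat
    exact tendsto_nhds_unique h1 h2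
  have : ∀ k, ρ < dist (z (φ k)) z0 := fun k => hbad (φ k) z0 hπz0
  have hlim : Tendsto (fun k => dist (z (φ k)) z0) atTop (𝓝 0) := by
    rw [← dist_self z0]
    exact hpz.dist tendsto_const_nhds
  have hfin : ρ ≤ 0 := ge_of_tendsto' hlim (fun k => (this k).le)
  linarith

/-- Fort-type lemma: existence of a point of lower semicontinuity of the fiber map. -/
lemma fort [CompactSpace X] [CompactSpace Y] [Nonempty Y] {π : X → Y} (hπ : Continuous π) :
    ∃ yh : Y, ∀ ρ > (0:ℝ), ∃ γ > 0, ∀ w, dist w yh < γ → ∀ u, π u = yh →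
      ∃ z, π z = w ∧ dist u z ≤ ρ := by
  -- the "good at scale ρ" predicate
  set P : ℝ → Y → Prop := fun ρ y =>
    ∃ γ > (0:ℝ), ∀ w, dist w y < γ → ∀ u, π u = y → ∃ z, π z = w ∧ dist u z ≤ ρ with hP
  -- key step: every ball contains a sub-ball of good points
  have key : ∀ ρ > (0:ℝ), ∀ y₀ : Y, ∀ r > (0:ℝ), ∃ y₁ : Y, ∃ r₁ > (0:ℝ),
      Metric.ball y₁ r₁ ⊆ Metric.ball y₀ r ∧ ∀ y ∈ Metric.ball y₁ r₁, P ρ y := by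
    intro ρ hρ y₀ r hr
    by_contra hcon
    push_neg at hcon
    -- every sub-ball contains a bad point
    have hbadpt : ∀ (c : Y) (s : ℝ), 0 < s → Metric.ball c s ⊆ Metric.ball y₀ r →
        ∃ y ∈ Metric.ball c s, ¬ P ρ y := by
      intro c s hs hsub
      obtain ⟨y, hy, hny⟩ := hcon c s hs hsub
      exact ⟨y, hy, hny⟩
    -- step construction
    have hstep : ∀ t : {p : Y × ℝ // 0 < p.2 ∧ Metric.ball p.1 p.2 ⊆ Metric.ball y₀ r},
        ∃ t' : {p : Y × ℝ // 0 < p.2 ∧ Metric.ball p.1 p.2 ⊆ Metric.ball y₀ r}, ∃ uu : X,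
          Metric.ball t'.val.1 t'.val.2 ⊆ Metric.ball t.val.1 t.val.2 ∧
          π uu ∈ Metric.ball t.val.1 t.val.2 ∧
          ∀ v ∈ Metric.ball t'.val.1 t'.val.2, ∀ zz : X, π zz = v → ρ/2 ≤ dist zz uu := by
      rintro ⟨⟨cc, s⟩, hs, hsub⟩
      obtain ⟨y, hy, hny⟩ := hbadpt cc s hs hsub
      simp only [hP] at hny
      push_neg at hny
      have hgap : 0 < s - dist y cc := by
        rw [Metric.mem_ball] at hy; linarith
      obtain ⟨wv, hwv, uu, huu, hbadu⟩ := hny (s - dist y cc) hgap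
      -- wv ∈ ball cc s
      have hwvball : wv ∈ Metric.ball cc s := by
        rw [Metric.mem_ball] at *
        have := dist_triangle wv y cc
        linarith
      -- usc at wv
      obtain ⟨γ₂, hγ₂, husc⟩ := fiber_usc hπ wv (half_pos hρ)
      have hgap2 : 0 < s - dist wv cc := by rw [Metric.mem_ball] at hwvball; linarith
      refine ⟨⟨⟨wv, min γ₂ (s - dist wv cc)⟩, lt_min hγ₂ hgap2, ?_⟩, uu, ?_, ?_, ?_⟩
      · intro v hv
        apply hsub
        rw [Metric.mem_ball] at *
        have := dist_triangle v wv cc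
        have := min_le_right γ₂ (s - dist wv cc)
        simp only at hv
        linarith [lt_of_lt_of_le hv (min_le_right γ₂ (s - dist wv cc))]
      · intro v hv
        rw [Metric.mem_ball] at *
        have h1 : dist v wv < s - dist wv cc :=
          lt_of_lt_of_le hv (min_le_right _ _)
        have := dist_triangle v wv cc
        linarith
      · rw [huu]; exact hy
      · intro v hv zz hzz
        have h1 : dist v wv < γ₂ := lt_of_lt_of_le hv (min_le_left _ _)
        obtain ⟨z'', hz'', hd''⟩ := husc v zz h1 hzz
        have h2 : ρ < dist uu z'' := hbadu z'' hz''
        have t := dist_triangle uu zz z''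
        have e2 : dist uu zz = dist zz uu := dist_comm _ _
        have t2 := dist_triangle uu z'' zz
        have e3 : dist z'' zz = dist zz z'' := dist_comm _ _
        linarith
    choose nxt upt hsub2 hmem2 hprot using hstep
    -- iterate
    have hr' : (0:ℝ) < r ∧ Metric.ball y₀ r ⊆ Metric.ball y₀ r := ⟨hr, subset_rfl⟩
    let st : ℕ → {p : Y × ℝ // 0 < p.2 ∧ Metric.ball p.1 p.2 ⊆ Metric.ball y₀ r} :=
      fun k => Nat.rec ⟨(y₀, r), hr'⟩ (fun _ t => nxt t) k
    have hst_succ : ∀ k, st (k+1) = nxt (st k) := fun k => rfl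
    set U : ℕ → X := fun k => upt (st k) with hU
    -- nesting
    have hnestd : ∀ (d k : ℕ),
        Metric.ball (st (k+d)).val.1 (st (k+d)).val.2 ⊆ Metric.ball (st k).val.1 (st k).val.2 := by
      intro d
      induction d with
      | zero => intro k; exact subset_rfl
      | succ m ih =>
        intro k
        exact subset_trans (hsub2 (st (k+m))) (ih k)
    have hnest : ∀ k l : ℕ, k ≤ l →
        Metric.ball (st l).val.1 (st l).val.2 ⊆ Metric.ball (st k).val.1 (st k).val.2 := by
      intro k l hkl
      have : l = k + (l - k) := by omega
      rw [this]
      exact hnestd (l-k) k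
    -- separation
    have hsep : ∀ l m : ℕ, l < m → ρ/2 ≤ dist (U m) (U l) := by
      intro l m hlm
      have h1 : π (U m) ∈ Metric.ball (st m).val.1 (st m).val.2 := hmem2 (st m)
      have h2 : π (U m) ∈ Metric.ball (st (l+1)).val.1 (st (l+1)).val.2 :=
        hnest (l+1) m hlm h1
      rw [hst_succ] at h2
      exact hprot (st l) (π (U m)) h2 (U m) rfl
    -- contradiction with compactness
    obtain ⟨p, -, φ, hφ, hpU⟩ := isCompact_univ.tendsto_subseq (x := U) (fun n => mem_univ _)
    have hcauchy := hpU.cauchySeq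
    rw [Metric.cauchySeq_iff] at hcauchy
    obtain ⟨N, hN⟩ := hcauchy (ρ/2) (by linarith)
    have h1 := hN (N+1) (by omega) N (le_refl N)
    simp only [Function.comp_apply] at h1
    have h2 := hsep (φ N) (φ (N+1)) (hφ (by omega))
    linarith
  -- open dense sets of good points
  set G : ℝ → Set Y := fun ρ => {y | ∃ r > (0:ℝ), ∀ y' ∈ Metric.ball y r, P ρ y'} with hG
  have hGopen : ∀ ρ, IsOpen (G ρ) := by
    intro ρ
    rw [Metric.isOpen_iff]
    rintro y ⟨r, hr, hy⟩
    refine ⟨r/2, half_pos hr, ?_⟩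
    intro y' hy'
    refine ⟨r/2, half_pos hr, fun y'' hy'' => hy y'' ?_⟩
    rw [Metric.mem_ball] at *
    have := dist_triangle y'' y' y
    linarith
  have hGdense : ∀ ρ > (0:ℝ), Dense (G ρ) := by
    intro ρ hρ
    rw [Metric.dense_iff]
    intro y r hr
    obtain ⟨y₁, r₁, hr₁, hsub, hgood⟩ := key ρ hρ y r hr
    refine ⟨y₁, hsub (Metric.mem_ball_self hr₁), r₁, hr₁, hgood⟩
  -- Baire
  have hdense : Dense (⋂ k : ℕ, G (1/((k:ℝ)+1))) := by
    apply dense_iInter_of_isOpen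
    · intro k; exact hGopen _
    · intro k; exact hGdense _ (by positivity)
  obtain ⟨yh, hyh⟩ := hdense.nonempty
  rw [mem_iInter] at hyh
  refine ⟨yh, ?_⟩
  intro ρ hρ
  obtain ⟨k, hk⟩ := exists_nat_gt (1/ρ)
  obtain ⟨r, hr, hgood⟩ := hyh k
  obtain ⟨γ, hγ, hQ⟩ := hgood yh (Metric.mem_ball_self hr)
  refine ⟨γ, hγ, fun w hw u hu => ?_⟩
  obtain ⟨z, hz, hdz⟩ := hQ w hw u hu
  refine ⟨z, hz, le_trans hdz ?_⟩
  rw [div_le_iff₀ (by positivity)]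
  rw [div_lt_iff₀ hρ] at hk
  nlinarith [hρ.le]

/-! ### Baire choice of a good base point -/

lemma exists_good_basepoint [CompactSpace X] [Nonempty X] (F : Equiv.Perm X)
    (hF : Continuous F) (hF' : Continuous F.symm) (hXt : TopTransitive F)
    (π : X → Y) (hπ : Continuous π) (hsurj : Function.Surjective π) (yh : Y) :
    ∃ x₀ : X, (∀ x : X, ∀ ε > (0:ℝ), ∃ n : ℕ, dist ((F ^ (n:ℤ)) x₀) x < ε) ∧
      (∀ γ > (0:ℝ), ∃ j : ℕ, dist (π ((F ^ (-(j:ℤ))) x₀)) yh < γ) := by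
  classical
  set OV : Set X → Set X := fun V => ⋃ n : ℕ, (fun x => (F ^ (n:ℤ)) x) ⁻¹' V with hOV
  have hOVopen : ∀ V : Set X, IsOpen V → IsOpen (OV V) := by
    intro V hV
    exact isOpen_iUnion (fun n => (continuous_zpow F hF hF' _).isOpen_preimage V hV)
  have hOVdense : ∀ V : Set X, IsOpen V → V.Nonempty → Dense (OV V) := by
    intro V hV hVne
    rw [dense_iff_inter_open]
    intro U hU hUne
    obtain ⟨n, pt, hpt⟩ := hXt V U hV hU hVne hUne
    exact ⟨pt, hpt.2, mem_iUnion.mpr ⟨n, hpt.1⟩⟩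
  set Dm : ℕ → Set X := fun m =>
    ⋃ j : ℕ, (fun x => (F ^ (-(j:ℤ))) x) ⁻¹' (π ⁻¹' (Metric.ball yh (1/((m:ℝ)+1)))) with hDm
  have hDmopen : ∀ m, IsOpen (Dm m) := by
    intro m
    exact isOpen_iUnion (fun j => ((continuous_zpow F hF hF' _).isOpen_preimage _
      (Metric.isOpen_ball.preimage hπ)))
  have hDmdense : ∀ m, Dense (Dm m) := by
    intro m
    rw [dense_iff_inter_open]
    intro U hU hUne
    have hWopen : IsOpen (π ⁻¹' (Metric.ball yh (1/((m:ℝ)+1)))) :=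
      Metric.isOpen_ball.preimage hπ
    have hWne : (π ⁻¹' (Metric.ball yh (1/((m:ℝ)+1)))).Nonempty := by
      obtain ⟨u, hu⟩ := hsurj yh
      exact ⟨u, by simp [hu, Metric.mem_ball]; positivity⟩
    obtain ⟨n, v, hv⟩ := hXt U (π ⁻¹' (Metric.ball yh (1/((m:ℝ)+1)))) hU hWopen hUne hWne
    refine ⟨(F ^ (n:ℤ)) v, hv.1, ?_⟩
    apply mem_iUnion.mpr
    refine ⟨n, ?_⟩
    have hvv : (F ^ (-(n:ℤ))) ((F ^ (n:ℤ)) v) = v := by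
      rw [← zpow_apply_add, neg_add_cancel]
      simp
    simp only [mem_preimage, hvv]
    exact hv.2
  -- countable family
  set fam : Set (Set X) :=
    {O | ∃ V ∈ TopologicalSpace.countableBasis X, V.Nonempty ∧ O = OV V} ∪
    {O | ∃ m : ℕ, O = Dm m} with hfam
  have hfam_count : fam.Countable := by
    apply Set.Countable.union
    · have h1 : {O | ∃ V ∈ TopologicalSpace.countableBasis X, V.Nonempty ∧ O = OV V} ⊆
          OV '' (TopologicalSpace.countableBasis X) := by
        rintro O ⟨V, hV, -, rfl⟩
        exact ⟨V, hV, rfl⟩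
      exact Set.Countable.mono h1
        ((TopologicalSpace.countable_countableBasis X).image OV)
    · have h2 : {O | ∃ m : ℕ, O = Dm m} ⊆ Set.range Dm := by
        rintro O ⟨m, rfl⟩
        exact ⟨m, rfl⟩
      exact Set.Countable.mono h2 (Set.countable_range Dm)
  have hfam_open : ∀ O ∈ fam, IsOpen O := by
    rintro O (⟨V, hV, -, rfl⟩ | ⟨m, rfl⟩)
    · exact hOVopen V (TopologicalSpace.isOpen_of_mem_countableBasis hV)
    · exact hDmopen m
  have hfam_dense : ∀ O ∈ fam, Dense O := by
    rintro O (⟨V, hV, hVne, rfl⟩ | ⟨m, rfl⟩)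
    · exact hOVdense V (TopologicalSpace.isOpen_of_mem_countableBasis hV) hVne
    · exact hDmdense m
  have hdense : Dense (⋂₀ fam) := dense_sInter_of_isOpen hfam_open hfam_count hfam_dense
  obtain ⟨x₀, hx₀⟩ := hdense.nonempty
  rw [mem_sInter] at hx₀
  refine ⟨x₀, ?_, ?_⟩
  · intro x ε hε
    obtain ⟨V, hV, hxV, hVsub⟩ :=
      (TopologicalSpace.isBasis_countableBasis X).exists_subset_of_mem_open
        (Metric.mem_ball_self hε) Metric.isOpen_ball
    have : x₀ ∈ OV V := hx₀ (OV V) (Or.inl ⟨V, hV, ⟨x, hxV⟩, rfl⟩)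
    obtain ⟨n, hn⟩ := mem_iUnion.mp this
    exact ⟨n, by have := hVsub hn; rwa [Metric.mem_ball] at this⟩
  · intro γ hγ
    obtain ⟨m, hm⟩ := exists_nat_gt (1/γ)
    have : x₀ ∈ Dm m := hx₀ (Dm m) (Or.inr ⟨m, rfl⟩)
    obtain ⟨j, hj⟩ := mem_iUnion.mp this
    simp only [mem_preimage, Metric.mem_ball] at hj
    refine ⟨j, lt_of_lt_of_le hj ?_⟩
    rw [div_le_iff₀ (by positivity)]
    rw [div_lt_iff₀ hγ] at hm
    nlinarith [hγ.le]

lemma zpow_apply_nn (F : Equiv.Perm X) (n j : ℕ) (x : X) :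
    (F ^ (-(n:ℤ))) ((F ^ (-(j:ℤ))) x) = (F ^ (-((n+j:ℕ):ℤ))) x := by
  rw [← zpow_apply_add]
  congr 2
  push_cast
  ring

lemma zpow_apply_cancel' (F : Equiv.Perm X) (j : ℕ) (x : X) :
    (F ^ ((j:ℕ):ℤ)) ((F ^ (-(j:ℤ))) x) = x := by
  rw [← zpow_apply_add, add_neg_cancel]
  simp

lemma Ws_symm {f : Equiv.Perm Y} {ε : ℝ} {x y : Y} (h : y ∈ Ws f ε x) : x ∈ Ws f ε y :=
  fun n => by rw [dist_comm]; exact h n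

lemma mapsTo_unstable [CompactSpace X] {F : Equiv.Perm X} {f : Equiv.Perm Y} {π : X → Y}
    (hπ : Continuous π) (hcom : ∀ x, π (F x) = f (π x)) (x : X) :
    Set.MapsTo π (unstableSet F x) (unstableSet f (π x)) := by
  intro z hz
  rw [mem_unstableSet_iff] at hz ⊢
  intro ε hε
  obtain ⟨d, hd, hmod⟩ := exists_modulus hπ (half_pos hε)
  obtain ⟨N, hN⟩ := hz d hd
  refine ⟨N, fun n hn => ?_⟩
  rw [← commute_zpow hcom, ← commute_zpow hcom]
  exact lt_of_le_of_lt (hmod _ _ (hN n hn).le) (half_lt_self hε)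

end Stmt8Aux

open Stmt8Aux in
/-- A factor map from a transitive Smale space to a Smale space is
u-resolving iff it is u-bijective. -/
theorem stmt8 {X Y : Type*} [MetricSpace X] [CompactSpace X] [MetricSpace Y] [CompactSpace Y]
    (F : Equiv.Perm X) (f : Equiv.Perm Y)
    (hX : IsSmale F) (hXt : TopTransitive F) (hY : IsSmale f)
    (π : X → Y) (hπ : IsFactorMap F f π) :
    UResolving F π ↔ ∀ x : X, Set.BijOn π (unstableSet F x) (unstableSet f (π x)) := by
  classical
  obtain ⟨hπc, hπsurj, hπcom⟩ := hπ
  obtain ⟨hFc, hFc', ⟨cX, hcX, hexpX⟩, ⟨ε₀X, hε₀X, hccX⟩⟩ := hX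
  obtain ⟨hfc, hfc', ⟨cY, hcY, hexpY⟩, ⟨ε₀Y, hε₀Y, hccY⟩⟩ := hY
  constructor
  swap
  · intro hbij x
    exact (hbij x).injOn
  intro hres
  rcases isEmpty_or_nonempty X with hXe | hXne
  · intro x
    exact (hXe.false x).elim
  have hYne : Nonempty Y := ⟨π (Classical.arbitrary X)⟩
  -- ### constants
  set e : ℝ := min ε₀Y cY / 4 with he_def
  have he : 0 < e := by
    have := lt_min hε₀Y hcY
    positivity
  have h2e_le : 2 * e ≤ ε₀Y := by
    have : min ε₀Y cY ≤ ε₀Y := min_le_left _ _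
    rw [he_def]; linarith
  have hecY : e < cY := by
    have : min ε₀Y cY ≤ cY := min_le_right _ _
    rw [he_def]; linarith
  obtain ⟨δ2e, hδ2e, hbr2e⟩ := hccY (2*e) (by linarith) h2e_le
  obtain ⟨d1, hd1, hmodF⟩ := exists_modulus (X := X) (Y := X) hFc (half_pos hcX)
  obtain ⟨d2, hd2, hmodπ⟩ := exists_modulus (X := X) (Y := Y) hπc he
  set εhX : ℝ := min (min (ε₀X/2) (cX/2)) (min d1 d2) with hεhX_def
  have hεhX : 0 < εhX :=
    lt_min (lt_min (by linarith) (by linarith)) (lt_min hd1 hd2)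
  have hεhX_le_ε₀X : εhX ≤ ε₀X :=
    le_trans (le_trans (min_le_left _ _) (min_le_left _ _)) (by linarith)
  have hεhX_le_cX2 : εhX ≤ cX/2 := le_trans (min_le_left _ _) (min_le_right _ _)
  have hεhX_lt_cX : εhX < cX := by linarith
  have hεhX_le_d1 : εhX ≤ d1 := le_trans (min_le_right _ _) (min_le_left _ _)
  have hεhX_le_d2 : εhX ≤ d2 := le_trans (min_le_right _ _) (min_le_right _ _)
  obtain ⟨δhX, hδhX, hbrX⟩ := hccX εhX hεhX hεhX_le_ε₀X
  obtain ⟨γU, hγU, hUU⟩ := claimU hFc hFc' hπc hπcom hexpX hres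
    (B := cX/2) (by linarith) (ρ := εhX) hεhX
  obtain ⟨yh, hfort⟩ := fort (π := π) hπc
  obtain ⟨γlsc, hγlsc, hlsc⟩ := hfort (δhX/4) (by linarith)
  set ρstar : ℝ := min δ2e γlsc / 4 with hρstar_def
  have hρstar : 0 < ρstar := by
    have := lt_min hδ2e hγlsc
    positivity
  have hρstar_le_δ2e : ρstar ≤ δ2e / 4 := by
    have : min δ2e γlsc ≤ δ2e := min_le_left _ _
    rw [hρstar_def]; linarith
  have hρstar_le_γlsc : ρstar ≤ γlsc / 4 := by
    have : min δ2e γlsc ≤ γlsc := min_le_right _ _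
    rw [hρstar_def]; linarith
  obtain ⟨γbd, hγbd, hbd⟩ := bracket_diag f hfc hfc' hexpY hecY hρstar
  have he_le_ε₀Y : e ≤ ε₀Y := by linarith
  obtain ⟨δbr1, hδbr1, hbr1⟩ := hccY e he he_le_ε₀Y
  set α : ℝ := min (min γU γbd) (min (min e (δ2e/2)) (δbr1/2)) / 2 with hα_def
  have hα : 0 < α := by
    have h1 := lt_min hγU hγbd
    have h2 := lt_min (lt_min he (by linarith : (0:ℝ) < δ2e/2))
      (by linarith : (0:ℝ) < δbr1/2)
    have := lt_min h1 h2
    positivity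
  have hα_le_γU : α ≤ γU := by
    have : min (min γU γbd) (min (min e (δ2e/2)) (δbr1/2)) ≤ γU :=
      le_trans (min_le_left _ _) (min_le_left _ _)
    rw [hα_def]; linarith
  have hα_le_γbd : α ≤ γbd := by
    have : min (min γU γbd) (min (min e (δ2e/2)) (δbr1/2)) ≤ γbd :=
      le_trans (min_le_left _ _) (min_le_right _ _)
    rw [hα_def]; linarith
  have hα_le_e : α ≤ e := by
    have : min (min γU γbd) (min (min e (δ2e/2)) (δbr1/2)) ≤ e :=
      le_trans (min_le_right _ _) (le_trans (min_le_left _ _) (min_le_left _ _))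
    rw [hα_def]; linarith
  have hα_le_δ2e : α ≤ δ2e/2 := by
    have : min (min γU γbd) (min (min e (δ2e/2)) (δbr1/2)) ≤ δ2e/2 :=
      le_trans (min_le_right _ _) (le_trans (min_le_left _ _) (min_le_right _ _))
    rw [hα_def]; linarith
  have hα_lt_δbr1 : α < δbr1 := by
    have : min (min γU γbd) (min (min e (δ2e/2)) (δbr1/2)) ≤ δbr1/2 :=
      le_trans (min_le_right _ _) (min_le_right _ _)
    rw [hα_def]; linarith
  obtain ⟨δbr2, hδbr2, hbr2⟩ := hccY α hα (by linarith)
  set α₂ : ℝ := min α δbr2 / 2 with hα₂_def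
  have hα₂ : 0 < α₂ := by
    have := lt_min hα hδbr2
    positivity
  have hα₂_le_α : α₂ ≤ α := by
    have : min α δbr2 ≤ α := min_le_left _ _
    rw [hα₂_def]; linarith
  have hα₂_le_δbr2 : α₂ ≤ δbr2/2 := by
    have : min α δbr2 ≤ δbr2 := min_le_right _ _
    rw [hα₂_def]; linarith
  have hmodF' : ∀ p q : X, dist p q ≤ εhX → dist (F p) (F q) ≤ cX/2 :=
    fun p q h => hmodF p q (le_trans h hεhX_le_d1)
  have hmodπ' : ∀ p q : X, dist p q ≤ εhX → dist (π p) (π q) ≤ e :=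
    fun p q h => hmodπ p q (le_trans h hεhX_le_d2)
  -- push instantiation
  have hpush : ∀ (w z : X) (j : ℕ), z ∈ cloWu F εhX w →
      (∀ n : ℕ, dist ((f ^ (-(n:ℤ))) (π ((F ^ (j:ℤ)) w)))
        ((f ^ (-(n:ℤ))) (π ((F ^ (j:ℤ)) z))) ≤ α) →
      (F ^ (j:ℤ)) z ∈ cloWu F εhX ((F ^ (j:ℤ)) w) := by
    intro w z j hz him
    exact push_lemma hπcom hmodF' hεhX_le_cX2 hα_le_γU hUU w z j hz him j (le_refl j)
  -- good base point
  obtain ⟨x₀, hx₀dense, hx₀back⟩ :=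
    exists_good_basepoint F hFc hFc' hXt π hπc hπsurj yh
  -- ### Seed
  have hseed : ∀ y' ∈ cloWu f α (π x₀), ∃ z ∈ cloWu F εhX x₀, π z = y' := by
    intro y' hy'
    have hjm : ∀ m : ℕ, ∃ j : ℕ, dist (π ((F ^ (-(j:ℤ))) x₀)) yh < 1/((m:ℝ)+1) :=
      fun m => hx₀back (1/((m:ℝ)+1)) (by positivity)
    choose jm hjm' using hjm
    obtain ⟨xb, -, φ, hφ, hxb⟩ := isCompact_univ.tendsto_subseq
      (x := fun m => (F ^ (-(jm m:ℤ))) x₀) (fun n => mem_univ _)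
    have hπxb : π xb = yh := by
      have h1 : Tendsto (fun m => π ((F ^ (-(jm (φ m):ℤ))) x₀)) atTop (𝓝 (π xb)) :=
        (hπc.tendsto xb).comp hxb
      have h2 : Tendsto (fun m => π ((F ^ (-(jm (φ m):ℤ))) x₀)) atTop (𝓝 yh) := by
        rw [tendsto_iff_dist_tendsto_zero]
        refine squeeze_zero (fun m => dist_nonneg) (fun m => (hjm' (φ m)).le.trans ?_)
          tendsto_one_div_add_atTop_nhds_zero_nat
        have hmm : ((m:ℝ)+1) ≤ ((φ m:ℕ):ℝ)+1 := by
          have : (m:ℝ) ≤ ((φ m:ℕ):ℝ) := by exact_mod_cast hφ.le_apply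
          linarith
        exact div_le_div_of_nonneg_left (by norm_num) (by positivity) hmm
      exact tendsto_nhds_unique h1 h2
    rw [Metric.tendsto_atTop] at hxb
    obtain ⟨M1, hM1⟩ := hxb (δhX/4) (by linarith)
    obtain ⟨M2, hM2⟩ := exists_nat_gt (2/γlsc)
    have hclose1 : dist ((F ^ (-(jm (φ (max M1 M2)):ℤ))) x₀) xb < δhX/4 := by
      have := hM1 (max M1 M2) (le_max_left _ _)
      simpa [Function.comp] using this
    have hclose2 : dist (π ((F ^ (-(jm (φ (max M1 M2)):ℤ))) x₀)) yh < γlsc/2 := by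
      refine lt_of_lt_of_le (hjm' (φ (max M1 M2))) ?_
      have h1 : (M2:ℝ) ≤ ((φ (max M1 M2):ℕ):ℝ) := by
        have : M2 ≤ φ (max M1 M2) := le_trans (le_max_right M1 M2) hφ.le_apply
        exact_mod_cast this
      rw [div_le_div_iff₀ (by positivity) (by linarith)]
      rw [div_lt_iff₀ hγlsc] at hM2
      nlinarith [hγlsc.le, mul_le_mul_of_nonneg_right h1 hγlsc.le]
    -- fix j
    obtain ⟨j, hclose1, hclose2⟩ :
        ∃ j : ℕ, dist ((F ^ (-(j:ℤ))) x₀) xb < δhX/4 ∧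
          dist (π ((F ^ (-(j:ℤ))) x₀)) yh < γlsc/2 :=
      ⟨jm (φ (max M1 M2)), hclose1, hclose2⟩
    have hqj_eq : π ((F ^ (-(j:ℤ))) x₀) = (f ^ (-(j:ℤ))) (π x₀) := commute_zpow hπcom _ _
    have hdqy : dist ((f ^ (-(j:ℤ))) (π x₀)) ((f ^ (-(j:ℤ))) y') ≤ α := hy' j
    -- Y-bracket
    obtain ⟨w, hw, -⟩ := hbr1 ((f ^ (-(j:ℤ))) y') ((f ^ (-(j:ℤ))) (π x₀))
      (by rw [dist_comm]; exact lt_of_le_of_lt hdqy hα_lt_δbr1)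
    have hwqj : dist w ((f ^ (-(j:ℤ))) (π x₀)) ≤ ρstar := by
      refine hbd ((f ^ (-(j:ℤ))) y') ((f ^ (-(j:ℤ))) (π x₀)) w
        (by rw [dist_comm]; exact le_trans hdqy hα_le_γbd) ?_ ?_
      · exact Ws_subset_cloWs hw.1
      · exact Wu_subset_cloWu hw.2
    have hwyh : dist w yh < γlsc := by
      have t := dist_triangle w ((f ^ (-(j:ℤ))) (π x₀)) yh
      rw [← hqj_eq] at t
      have h3 : ρstar ≤ γlsc/4 := hρstar_le_γlsc
      rw [← hqj_eq] at hwqj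
      linarith
    obtain ⟨z, hπz, hdz⟩ := hlsc w hwyh xb hπxb
    have hdzx : dist z ((F ^ (-(j:ℤ))) x₀) < δhX := by
      have t := dist_triangle z xb ((F ^ (-(j:ℤ))) x₀)
      have e1 : dist z xb = dist xb z := dist_comm _ _
      have e2 : dist xb ((F ^ (-(j:ℤ))) x₀) = dist ((F ^ (-(j:ℤ))) x₀) xb := dist_comm _ _
      linarith
    obtain ⟨z', hz', -⟩ := hbrX z ((F ^ (-(j:ℤ))) x₀) hdzx
    -- identify π z'
    have hπz' : π z' = (f ^ (-(j:ℤ))) y' := by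
      have hWs : π z' ∈ cloWs f e w := by
        rw [← hπz]
        exact image_cloWs hπcom hmodπ' (Ws_subset_cloWs hz'.1)
      have hWu : π z' ∈ cloWu f e ((f ^ (-(j:ℤ))) (π x₀)) := by
        rw [← hqj_eq]
        exact image_cloWu hπcom hmodπ' (Wu_subset_cloWu hz'.2)
      have hyjWs : (f ^ (-(j:ℤ))) y' ∈ Ws f (2*e) w :=
        Ws_symm (fun n => lt_of_lt_of_le (hw.1 n) (by linarith))
      have hyjWu : (f ^ (-(j:ℤ))) y' ∈ Wu f (2*e) ((f ^ (-(j:ℤ))) (π x₀)) := by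
        intro n
        rw [zpow_apply_nn, zpow_apply_nn]
        exact lt_of_le_of_lt (hy' (n+j)) (by linarith)
      have hd2e : dist w ((f ^ (-(j:ℤ))) (π x₀)) < δ2e := lt_of_le_of_lt hwqj (by linarith)
      exact bracket_unique hbr2e hd2e
        ⟨cloWs_subset_Ws (by linarith) hWs, cloWu_subset_Wu (by linarith) hWu⟩
        ⟨hyjWs, hyjWu⟩
    have hzmem : z' ∈ cloWu F εhX ((F ^ (-(j:ℤ))) x₀) := Wu_subset_cloWu hz'.2
    have himg : ∀ n : ℕ, dist ((f ^ (-(n:ℤ))) (π ((F ^ ((j:ℕ):ℤ)) ((F ^ (-(j:ℤ))) x₀))))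
        ((f ^ (-(n:ℤ))) (π ((F ^ ((j:ℕ):ℤ)) z'))) ≤ α := by
      intro n
      rw [zpow_apply_cancel', commute_zpow hπcom, hπz', zpow_apply_cancel']
      exact hy' n
    have hfinal := hpush ((F ^ (-(j:ℤ))) x₀) z' j hzmem himg
    rw [zpow_apply_cancel'] at hfinal
    refine ⟨(F ^ ((j:ℕ):ℤ)) z', hfinal, ?_⟩
    rw [commute_zpow hπcom, hπz', zpow_apply_cancel']
  -- ### Invariance
  have hstep : ∀ x : X, (∀ y' ∈ cloWu f α (π x), ∃ z ∈ cloWu F εhX x, π z = y') →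
      (∀ y' ∈ cloWu f α (π ((F ^ ((1:ℕ):ℤ)) x)),
        ∃ z ∈ cloWu F εhX ((F ^ ((1:ℕ):ℤ)) x), π z = y') := by
    intro x hx y' hy'
    have hy''mem : (f ^ (-((1:ℕ):ℤ))) y' ∈ cloWu f α (π x) := by
      intro n
      have e1 : (f ^ (-(n:ℤ))) (π x) = (f ^ (-((n+1:ℕ):ℤ))) (π ((F ^ ((1:ℕ):ℤ)) x)) := by
        rw [commute_zpow hπcom, ← zpow_apply_add]
        congr 2
        push_cast
        ring
      have e2 : (f ^ (-(n:ℤ))) ((f ^ (-((1:ℕ):ℤ))) y') = (f ^ (-((n+1:ℕ):ℤ))) y' := by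
        rw [← zpow_apply_add]
        congr 2
        push_cast
        ring
      rw [e1, e2]
      exact hy' (n+1)
    obtain ⟨z, hz, hπz⟩ := hx _ hy''mem
    have e3 : π ((F ^ ((1:ℕ):ℤ)) z) = y' := by
      rw [commute_zpow hπcom, hπz, ← zpow_apply_add]
      simp
    have himg : ∀ n : ℕ, dist ((f ^ (-(n:ℤ))) (π ((F ^ ((1:ℕ):ℤ)) x)))
        ((f ^ (-(n:ℤ))) (π ((F ^ ((1:ℕ):ℤ)) z))) ≤ α := by
      intro n
      rw [e3]
      exact hy' n
    exact ⟨(F ^ ((1:ℕ):ℤ)) z, hpush x z 1 hz himg, e3⟩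
  have hGoodOrbit : ∀ n : ℕ, ∀ y' ∈ cloWu f α (π ((F ^ (n:ℤ)) x₀)),
      ∃ z ∈ cloWu F εhX ((F ^ (n:ℤ)) x₀), π z = y' := by
    intro n
    induction n with
    | zero =>
      have e0 : (F ^ ((0:ℕ):ℤ)) x₀ = x₀ := by norm_num
      rw [e0]
      exact hseed
    | succ k ih =>
      have hnext := hstep ((F ^ (k:ℤ)) x₀) ih
      have e4 : (F ^ ((1:ℕ):ℤ)) ((F ^ ((k:ℕ):ℤ)) x₀) = (F ^ (((k+1:ℕ)):ℤ)) x₀ := by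
        rw [← zpow_apply_add]
        congr 2
        push_cast
        ring
      rwa [e4] at hnext
  -- ### Closure
  have hGoodAll : ∀ x : X, ∀ y' ∈ cloWu f α₂ (π x), ∃ z ∈ cloWu F εhX x, π z = y' := by
    intro x y' hy'
    choose nk hnk using fun k : ℕ => hx₀dense x (1/((k:ℝ)+1)) (by positivity)
    have hxk_tend : Tendsto (fun k => (F ^ ((nk k:ℕ):ℤ)) x₀) atTop (𝓝 x) := by
      rw [tendsto_iff_dist_tendsto_zero]
      exact squeeze_zero (fun k => dist_nonneg) (fun k => (hnk k).le)
        tendsto_one_div_add_atTop_nhds_zero_nat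
    have hπxk_tend : Tendsto (fun k => π ((F ^ ((nk k:ℕ):ℤ)) x₀)) atTop (𝓝 (π x)) :=
      (hπc.tendsto x).comp hxk_tend
    have hα₂δ : (0:ℝ) < δbr2 - α₂ := by linarith
    rw [Metric.tendsto_atTop] at hπxk_tend
    obtain ⟨K, hK⟩ := hπxk_tend (δbr2 - α₂) hα₂δ
    have hdist : ∀ k : ℕ, dist y' (π ((F ^ ((nk (k+K):ℕ):ℤ)) x₀)) < δbr2 := by
      intro k
      have h1 := hK (k+K) (by omega)
      have h2 : dist y' (π x) ≤ α₂ := by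
        have h0 := hy' 0
        simp only [Nat.cast_zero, neg_zero, zpow_zero, Equiv.Perm.coe_one, id_eq] at h0
        rw [dist_comm]
        exact h0
      have t := dist_triangle y' (π x) (π ((F ^ ((nk (k+K):ℕ):ℤ)) x₀))
      have ec : dist (π x) (π ((F ^ ((nk (k+K):ℕ):ℤ)) x₀))
          = dist (π ((F ^ ((nk (k+K):ℕ):ℤ)) x₀)) (π x) := dist_comm _ _
      linarith
    have hchoice : ∀ k : ℕ, ∃ wk, wk ∈ Ws f α y' ∩ Wu f α (π ((F ^ ((nk (k+K):ℕ):ℤ)) x₀)) := by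
      intro k
      obtain ⟨wk, hwk, -⟩ := hbr2 y' (π ((F ^ ((nk (k+K):ℕ):ℤ)) x₀)) (hdist k)
      exact ⟨wk, hwk⟩
    choose wk hwk using hchoice
    have hlift : ∀ k : ℕ, ∃ z ∈ cloWu F εhX ((F ^ ((nk (k+K):ℕ):ℤ)) x₀), π z = wk k :=
      fun k => hGoodOrbit (nk (k+K)) (wk k) (Wu_subset_cloWu (hwk k).2)
    choose zk hzk hπzk using hlift
    obtain ⟨zl, wl, φ, hφ, hzl, hwl⟩ := pair_subseq zk wk
    have hidx : Tendsto (fun k => φ k + K) atTop atTop :=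
      tendsto_atTop_mono (fun k => le_trans hφ.le_apply (Nat.le_add_right _ K)) tendsto_id
    have hxkφ : Tendsto (fun k => (F ^ ((nk (φ k + K):ℕ):ℤ)) x₀) atTop (𝓝 x) :=
      hxk_tend.comp hidx
    -- zl ∈ cloWu F εhX x
    have hzlmem : zl ∈ cloWu F εhX x := by
      intro n
      have hlim : Tendsto (fun k => dist ((F ^ (-(n:ℤ))) ((F ^ ((nk (φ k + K):ℕ):ℤ)) x₀))
          ((F ^ (-(n:ℤ))) (zk (φ k)))) atTop
          (𝓝 (dist ((F ^ (-(n:ℤ))) x) ((F ^ (-(n:ℤ))) zl))) :=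
        (((continuous_zpow F hFc hFc' _).tendsto x).comp hxkφ).dist
          (((continuous_zpow F hFc hFc' _).tendsto zl).comp hzl)
      refine le_of_tendsto hlim ?_
      filter_upwards with k
      exact hzk (φ k) n
    have hπzl : π zl = wl := by
      have h1 : Tendsto (fun k => π (zk (φ k))) atTop (𝓝 (π zl)) := (hπc.tendsto zl).comp hzl
      have h2 : Tendsto (fun k => π (zk (φ k))) atTop (𝓝 wl) := by
        have : (fun k => π (zk (φ k))) = fun k => wk (φ k) := by
          funext k
          exact hπzk (φ k)
        rw [this]
        exact hwl
      exact tendsto_nhds_unique h1 h2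
    have hwly : wl = y' := by
      have hWs : wl ∈ Ws f (2*e) y' := by
        intro n
        have hlim : Tendsto (fun k => dist ((f ^ (n:ℤ)) y') ((f ^ (n:ℤ)) (wk (φ k)))) atTop
            (𝓝 (dist ((f ^ (n:ℤ)) y') ((f ^ (n:ℤ)) wl))) :=
          tendsto_const_nhds.dist (((continuous_zpow f hfc hfc' _).tendsto wl).comp hwl)
        have hle : dist ((f ^ (n:ℤ)) y') ((f ^ (n:ℤ)) wl) ≤ α := by
          refine le_of_tendsto hlim ?_
          filter_upwards with k
          exact ((hwk (φ k)).1 n).le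
        have : α < 2*e := by linarith
        linarith
      have hWu : wl ∈ Wu f (2*e) (π x) := by
        intro n
        have hlim : Tendsto (fun k =>
            dist ((f ^ (-(n:ℤ))) (π ((F ^ ((nk (φ k + K):ℕ):ℤ)) x₀)))
              ((f ^ (-(n:ℤ))) (wk (φ k)))) atTop
            (𝓝 (dist ((f ^ (-(n:ℤ))) (π x)) ((f ^ (-(n:ℤ))) wl))) :=
          (((continuous_zpow f hfc hfc' _).tendsto (π x)).comp
            ((hπc.tendsto x).comp hxkφ)).dist
            (((continuous_zpow f hfc hfc' _).tendsto wl).comp hwl)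
        have hle : dist ((f ^ (-(n:ℤ))) (π x)) ((f ^ (-(n:ℤ))) wl) ≤ α := by
          refine le_of_tendsto hlim ?_
          filter_upwards with k
          exact ((hwk (φ k)).2 n).le
        have : α < 2*e := by linarith
        linarith
      have hy'Ws : y' ∈ Ws f (2*e) y' := by
        intro n
        rw [dist_self]
        linarith
      have hy'Wu : y' ∈ Wu f (2*e) (π x) := by
        intro n
        exact lt_of_le_of_lt (hy' n) (by linarith)
      have hdy : dist y' (π x) < δ2e := by
        have h0 := hy' 0
        simp only [Nat.cast_zero, neg_zero, zpow_zero, Equiv.Perm.coe_one, id_eq] at h0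
        rw [dist_comm]
        exact lt_of_le_of_lt h0 (by linarith)
      exact bracket_unique hbr2e hdy ⟨hWs, hWu⟩ ⟨hy'Ws, hy'Wu⟩
    exact ⟨zl, hzlmem, by rw [hπzl, hwly]⟩
  -- ### Final assembly
  intro x
  refine ⟨mapsTo_unstable hπc hπcom x, hres x, ?_⟩
  intro y' hy'
  rw [mem_unstableSet_iff] at hy'
  obtain ⟨N, hN⟩ := hy' α₂ hα₂
  have hmem : (f ^ (-(N:ℤ))) y' ∈ cloWu f α₂ (π ((F ^ (-(N:ℤ))) x)) := by
    intro n
    rw [commute_zpow hπcom, zpow_apply_nn, zpow_apply_nn]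
    exact (hN (n+N) (by omega)).le
  obtain ⟨z, hz, hπz⟩ := hGoodAll ((F ^ (-(N:ℤ))) x) ((f ^ (-(N:ℤ))) y') hmem
  have hzun : z ∈ unstableSet F ((F ^ (-(N:ℤ))) x) :=
    cloWu_subset_unstableSet hFc hFc' hexpX hεhX_lt_cX hz
  refine ⟨(F ^ ((N:ℕ):ℤ)) z, ?_, ?_⟩
  · have hsh := unstableSet_shift ((N:ℕ):ℤ) hzun
    rwa [zpow_apply_cancel'] at hsh
  · rw [commute_zpow hπcom, hπz, zpow_apply_cancel']
end

section
/- Let (X,F) be a transitive Smale space, (Y,f) a transitive finitely presented system, and θ : X → Y a factor map. Then θ is injective on some nonempty open subset of X if and only if θ is u-resolving, s-resolving, and injective on a residual subset of X. -/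
open Filter Topology Set

section Proofs9

set_option linter.unusedSectionVars false

section Helpers

variable {X Y : Type*} [MetricSpace X] [MetricSpace Y]

theorem permZpow_symm' (F : Equiv.Perm X) (n : ℤ) : ⇑(F.symm ^ n) = ⇑(F ^ (-n)) := by
  rw [← Equiv.Perm.inv_def, inv_zpow, ← zpow_neg]

theorem zpow_apply_add' (F : Equiv.Perm X) (m n : ℤ) (x : X) :
    (F ^ m) ((F ^ n) x) = (F ^ (m + n)) x := by
  rw [← Equiv.Perm.mul_apply, ← zpow_add]

theorem contZ' {F : Equiv.Perm X} (hF : Continuous ⇑F) (hF' : Continuous ⇑F.symm) (n : ℤ) :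
    Continuous ⇑(F ^ n) := by
  have hnat : ∀ k : ℕ, Continuous ⇑(F ^ (k : ℤ)) := by
    intro k
    induction k with
    | zero => simpa using continuous_id
    | succ k ih =>
      have : ((k : ℤ) + 1) = (((k + 1 : ℕ)) : ℤ) := by push_cast; ring
      rw [← this, zpow_add, zpow_one]
      have : ⇑(F ^ (k : ℤ) * F) = ⇑(F ^ (k : ℤ)) ∘ ⇑F := rfl
      rw [this]; exact ih.comp hF
  have hneg : ∀ k : ℕ, Continuous ⇑(F ^ (-(k : ℤ))) := by
    intro k
    induction k with
    | zero => simpa using continuous_id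
    | succ k ih =>
      have h1 : (-(((k + 1 : ℕ)) : ℤ)) = (-(k : ℤ)) + (-1) := by push_cast; ring
      rw [h1, zpow_add]
      have h2 : ⇑(F ^ (-(k : ℤ)) * F ^ (-1 : ℤ)) = ⇑(F ^ (-(k : ℤ))) ∘ ⇑(F ^ (-1 : ℤ)) := rfl
      rw [h2]
      have h3 : ⇑(F ^ (-1 : ℤ)) = ⇑F.symm := by
        rw [zpow_neg, zpow_one, ← Equiv.Perm.inv_def]
      exact ih.comp (h3 ▸ hF')
  rcases Int.eq_nat_or_neg n with ⟨k, rfl | rfl⟩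
  · exact hnat k
  · exact hneg k

theorem semiconjZ' {F : Equiv.Perm X} {f : Equiv.Perm Y} {θ : X → Y}
    (hs : ∀ x, θ (F x) = f (θ x)) : ∀ (n : ℤ) (x : X), θ ((F ^ n) x) = (f ^ n) (θ x) := by
  have hsymm : ∀ x, θ (F.symm x) = f.symm (θ x) := by
    intro x
    have := hs (F.symm x)
    rw [Equiv.apply_symm_apply] at this
    rw [this, Equiv.symm_apply_apply]
  have hnat : ∀ (k : ℕ) (x : X), θ ((F ^ (k : ℤ)) x) = (f ^ (k : ℤ)) (θ x) := by
    intro k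
    induction k with
    | zero => intro x; simp
    | succ k ih =>
      intro x
      have h1 : (((k + 1 : ℕ)) : ℤ) = 1 + (k : ℤ) := by push_cast; ring
      rw [h1, zpow_add, zpow_add, zpow_one, zpow_one, Equiv.Perm.mul_apply,
        Equiv.Perm.mul_apply, hs, ih]
  have hneg : ∀ (k : ℕ) (x : X), θ ((F ^ (-(k : ℤ))) x) = (f ^ (-(k : ℤ))) (θ x) := by
    intro k
    induction k with
    | zero => intro x; simp
    | succ k ih =>
      intro x
      have h1 : (-(((k + 1 : ℕ)) : ℤ)) = (-1) + (-(k : ℤ)) := by push_cast; ring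
      have h3 : ⇑(F ^ (-1 : ℤ)) = ⇑F.symm := by
        rw [zpow_neg, zpow_one, ← Equiv.Perm.inv_def]
      have h3' : ⇑(f ^ (-1 : ℤ)) = ⇑f.symm := by
        rw [zpow_neg, zpow_one, ← Equiv.Perm.inv_def]
      rw [h1, zpow_add, zpow_add, Equiv.Perm.mul_apply, Equiv.Perm.mul_apply,
        h3, h3', hsymm, ih]
  intro n
  rcases Int.eq_nat_or_neg n with ⟨k, rfl | rfl⟩
  · exact hnat k
  · exact hneg k

theorem expansive_symm' {F : Equiv.Perm X} {c : ℝ} (h : Expansive F c) : Expansive F.symm c := by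
  intro p q hpq
  obtain ⟨n, hn⟩ := h p q hpq
  refine ⟨-n, ?_⟩
  rw [permZpow_symm', neg_neg]
  exact hn



theorem lemAX {X : Type*} [MetricSpace X] [CompactSpace X] {F : Equiv.Perm X}
    (hF : Continuous ⇑F) (hF' : Continuous ⇑F.symm) {c ε : ℝ}
    (hexp : Expansive F c) (hεc : ε ≤ c) {a b : X}
    (h : ∀ n : ℕ, dist ((F ^ (n : ℤ)) a) ((F ^ (n : ℤ)) b) < ε) :
    Tendsto (fun n : ℕ => dist ((F ^ (n : ℤ)) a) ((F ^ (n : ℤ)) b)) atTop (𝓝 0) := by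
  by_contra hcon
  rw [Metric.tendsto_atTop] at hcon
  push_neg at hcon
  obtain ⟨α, hα, hfreq⟩ := hcon
  choose s hs1 hs2 using hfreq
  set z : ℕ → X × X := fun k => ((F ^ (s k : ℤ)) a, (F ^ (s k : ℤ)) b) with hz
  obtain ⟨⟨p, q⟩, φ, hφ, hconv⟩ := CompactSpace.tendsto_subseq z
  have h1 : Tendsto (fun k => (z (φ k)).1) atTop (𝓝 p) :=
    (continuous_fst.tendsto (p, q)).comp hconv
  have h2 : Tendsto (fun k => (z (φ k)).2) atTop (𝓝 q) :=
    (continuous_snd.tendsto (p, q)).comp hconv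
  have hdist : ∀ k : ℕ, α ≤ dist (z k).1 (z k).2 := by
    intro k
    have := hs2 k
    rw [Real.dist_0_eq_abs, abs_of_nonneg dist_nonneg] at this
    exact this
  have hpq : α ≤ dist p q :=
    ge_of_tendsto (h1.dist h2) (Eventually.of_forall fun k => hdist (φ k))
  have hne : p ≠ q := by
    intro hh
    rw [hh, dist_self] at hpq
    linarith
  have hbound : ∀ m : ℤ, dist ((F ^ m) p) ((F ^ m) q) ≤ ε := by
    intro m
    have hc : Tendsto (fun k => dist ((F ^ m) (z (φ k)).1) ((F ^ m) (z (φ k)).2)) atTop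
        (𝓝 (dist ((F ^ m) p) ((F ^ m) q))) :=
      (((contZ' hF hF' m).tendsto p).comp h1).dist (((contZ' hF hF' m).tendsto q).comp h2)
    refine le_of_tendsto hc ?_
    filter_upwards [eventually_ge_atTop m.natAbs] with k hk
    have hnk : (0 : ℤ) ≤ m + (s (φ k) : ℤ) := by
      have h4 : m.natAbs ≤ s (φ k) := le_trans hk (le_trans hφ.le_apply (hs1 (φ k)))
      omega
    set t : ℕ := (m + (s (φ k) : ℤ)).toNat with hts
    have ht : (t : ℤ) = m + (s (φ k) : ℤ) := Int.toNat_of_nonneg hnk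
    have e1 : (F ^ m) (z (φ k)).1 = (F ^ (t : ℤ)) a := by
      simp only [hz, zpow_apply_add', ht]
    have e2 : (F ^ m) (z (φ k)).2 = (F ^ (t : ℤ)) b := by
      simp only [hz, zpow_apply_add', ht]
    rw [e1, e2]
    exact le_of_lt (h t)
  obtain ⟨m, hm⟩ := hexp p q hne
  have := hbound m
  linarith

theorem unif_mod' {X Y : Type*} [MetricSpace X] [CompactSpace X] [MetricSpace Y] {θ : X → Y}
    (hθ : Continuous θ) {η : ℝ} (hη : 0 < η) :
    ∃ ε > 0, ∀ u v : X, dist u v < ε → dist (θ u) (θ v) < η := by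
  have h := CompactSpace.uniformContinuous_of_continuous hθ
  rw [Metric.uniformContinuous_iff] at h
  obtain ⟨ε, hε, hh⟩ := h η hη
  exact ⟨ε, hε, fun u v huv => hh huv⟩

theorem ures_of_inj {X Y : Type*} [MetricSpace X] [CompactSpace X] [MetricSpace Y]
    {F : Equiv.Perm X} {f : Equiv.Perm Y} {θ : X → Y}
    (hCC : CanonicalCoords F) (hexpX : ∃ c > 0, Expansive F c)
    (hexpY : ∃ c > 0, Expansive f c) (htr : TopTransitive F)
    (hθc : Continuous θ) (hsemi : ∀ x, θ (F x) = f (θ x))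
    {U : Set X} (hUo : IsOpen U) (hUne : U.Nonempty) (hUinj : Set.InjOn θ U)
    (hUsat : θ ⁻¹' (θ '' U) = U) : UResolving F θ := by
  intro x₀ p hp q hq hθpq
  by_contra hne
  obtain ⟨cX, hcX, hEX⟩ := hexpX
  obtain ⟨cY, hcY, hEY⟩ := hexpY
  obtain ⟨ε₀, hε₀, hCCf⟩ := hCC
  obtain ⟨u₀, hu₀⟩ := hUne
  obtain ⟨r₀, hr₀, hball⟩ := Metric.isOpen_iff.mp hUo u₀ hu₀
  obtain ⟨ε₂, hε₂, hmod⟩ := unif_mod' hθc (half_pos hcY)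
  set ε : ℝ := min (min ε₀ (cX / 2)) (min (r₀ / 2) (ε₂ / 2)) with hεdef
  have hεpos : 0 < ε := by positivity
  have hεε₀ : ε ≤ ε₀ := le_trans (min_le_left _ _) (min_le_left _ _)
  have hεcX : 2 * ε ≤ cX := by
    have h : ε ≤ cX / 2 := le_trans (min_le_left _ _) (min_le_right _ _)
    linarith
  have hεr : ε ≤ r₀ / 2 := le_trans (min_le_right _ _) (min_le_left _ _)
  have hεε₂ : 2 * ε ≤ ε₂ := by
    have h : ε ≤ ε₂ / 2 := le_trans (min_le_right _ _) (min_le_right _ _)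
    linarith
  obtain ⟨δ, hδ, hbr⟩ := hCCf ε hεpos hεε₀
  -- the backward orbits of p and q converge together
  have hu : Tendsto (fun n : ℕ => dist ((F ^ (-(n : ℤ))) p) ((F ^ (-(n : ℤ))) q))
      atTop (𝓝 0) := by
    have hsum := hp.add hq
    rw [add_zero] at hsum
    refine squeeze_zero (fun n => dist_nonneg) (fun n => ?_) hsum
    exact dist_triangle_left _ _ _
  have hmin : 0 < min ε (δ / 2) := lt_min hεpos (by linarith)
  obtain ⟨n₀, hn₀⟩ := eventually_atTop.mp (hu.eventually (gt_mem_nhds hmin))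
  set a : X := (F ^ (-(n₀ : ℤ))) p with hadef
  set a' : X := (F ^ (-(n₀ : ℤ))) q with ha'def
  have htail : ∀ k : ℕ, dist ((F ^ (-(k : ℤ))) a) ((F ^ (-(k : ℤ))) a') < min ε (δ / 2) := by
    intro k
    have e1 : (F ^ (-(k : ℤ))) a = (F ^ (-((n₀ + k : ℕ) : ℤ))) p := by
      rw [hadef, zpow_apply_add']
      congr 1
      push_cast
      ring
    have e2 : (F ^ (-(k : ℤ))) a' = (F ^ (-((n₀ + k : ℕ) : ℤ))) q := by
      rw [ha'def, zpow_apply_add']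
      congr 1
      push_cast
      ring
    rw [e1, e2]
    exact hn₀ (n₀ + k) (Nat.le_add_right _ _)
  have haa' : dist a a' < min ε (δ / 2) := by
    have := htail 0
    simpa using this
  have hane : a ≠ a' := fun h => hne ((F ^ (-(n₀ : ℤ))).injective h)
  have hθa : θ a = θ a' := by
    rw [hadef, ha'def, semiconjZ' hsemi, semiconjZ' hsemi, hθpq]
  -- transitivity to find g
  obtain ⟨n, zz, hz1, hz2⟩ := htr (Metric.ball a (δ / 2)) (Metric.ball u₀ (r₀ / 2))
    Metric.isOpen_ball Metric.isOpen_ball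
    ⟨a, Metric.mem_ball_self (by linarith)⟩ ⟨u₀, Metric.mem_ball_self (by linarith)⟩
  set g : X := (F ^ (n : ℤ)) zz with hgdef
  have hga : dist a g < δ / 2 := by
    have : dist ((F ^ (n : ℤ)) zz) a < δ / 2 := hz1
    rw [dist_comm] at this
    exact this
  have hga' : dist a' g < δ :=
    calc dist a' g ≤ dist a' a + dist a g := dist_triangle _ _ _
      _ < δ / 2 + δ / 2 := by
          have h1 : dist a' a < δ / 2 := by rw [dist_comm]; exact lt_of_lt_of_le haa' (min_le_right _ _)
          exact add_lt_add h1 hga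
      _ = δ := by ring
  obtain ⟨w, ⟨hwS, hwU⟩, -⟩ := hbr a g (lt_of_lt_of_le hga (by linarith))
  obtain ⟨w', ⟨hw'S, hw'U⟩, -⟩ := hbr a' g hga'
  have hεε₂' : ε < ε₂ := by linarith
  have h2εε₂ : ∀ u v : X, dist u v < 2 * ε → dist (θ u) (θ v) < cY / 2 := by
    intro u v huv
    exact hmod _ _ (lt_of_lt_of_le huv hεε₂)
  -- θ w = θ w'
  have hθw : θ w = θ w' := by
    by_contra hne2
    obtain ⟨m, hm⟩ := hEY (θ w) (θ w') hne2
    have hb : dist ((f ^ m) (θ w)) ((f ^ m) (θ w')) < cY := by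
      rcases Int.eq_nat_or_neg m with ⟨k, rfl | rfl⟩
      · have e1 : dist ((F ^ (k : ℤ)) a) ((F ^ (k : ℤ)) w) < ε := hwS k
        have e2 : dist ((F ^ (k : ℤ)) a') ((F ^ (k : ℤ)) w') < ε := hw'S k
        have hmid : θ ((F ^ (k : ℤ)) a) = θ ((F ^ (k : ℤ)) a') := by
          rw [semiconjZ' hsemi (k : ℤ) a, semiconjZ' hsemi (k : ℤ) a', hθa]
        have r1 : dist (θ ((F ^ (k : ℤ)) w)) (θ ((F ^ (k : ℤ)) a)) < cY / 2 := by
          rw [dist_comm] at e1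
          exact hmod _ _ (lt_of_lt_of_le e1 (le_of_lt hεε₂'))
        have r2 : dist (θ ((F ^ (k : ℤ)) a')) (θ ((F ^ (k : ℤ)) w')) < cY / 2 :=
          hmod _ _ (lt_of_lt_of_le e2 (le_of_lt hεε₂'))
        calc dist ((f ^ (k : ℤ)) (θ w)) ((f ^ (k : ℤ)) (θ w'))
            = dist (θ ((F ^ (k : ℤ)) w)) (θ ((F ^ (k : ℤ)) w')) := by
              rw [semiconjZ' hsemi, semiconjZ' hsemi]
          _ ≤ dist (θ ((F ^ (k : ℤ)) w)) (θ ((F ^ (k : ℤ)) a))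
              + dist (θ ((F ^ (k : ℤ)) a)) (θ ((F ^ (k : ℤ)) w')) := dist_triangle _ _ _
          _ < cY / 2 + cY / 2 := by
              refine add_lt_add r1 ?_
              rw [hmid]
              exact r2
          _ = cY := by ring
      · have e1 : dist ((F ^ (-(k : ℤ))) g) ((F ^ (-(k : ℤ))) w) < ε := hwU k
        have e2 : dist ((F ^ (-(k : ℤ))) g) ((F ^ (-(k : ℤ))) w') < ε := hw'U k
        have e3 : dist ((F ^ (-(k : ℤ))) w) ((F ^ (-(k : ℤ))) w') < 2 * ε := by
          have := dist_triangle_left ((F ^ (-(k : ℤ))) w) ((F ^ (-(k : ℤ))) w')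
            ((F ^ (-(k : ℤ))) g)
          linarith
        calc dist ((f ^ (-(k : ℤ))) (θ w)) ((f ^ (-(k : ℤ))) (θ w'))
            = dist (θ ((F ^ (-(k : ℤ))) w)) (θ ((F ^ (-(k : ℤ))) w')) := by
              rw [semiconjZ' hsemi, semiconjZ' hsemi]
          _ < cY / 2 := h2εε₂ _ _ e3
          _ < cY := by linarith
    exact absurd hm (not_lt.mpr (le_of_lt hb))
  -- w ≠ w'
  have hwne : w ≠ w' := by
    intro hww
    apply hane
    by_contra hane'
    obtain ⟨m, hm⟩ := hEX a a' hane'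
    have hb : dist ((F ^ m) a) ((F ^ m) a') < cX := by
      rcases Int.eq_nat_or_neg m with ⟨k, rfl | rfl⟩
      · have e1 : dist ((F ^ (k : ℤ)) a) ((F ^ (k : ℤ)) w) < ε := hwS k
        have e2 : dist ((F ^ (k : ℤ)) a') ((F ^ (k : ℤ)) w') < ε := hw'S k
        rw [← hww] at e2
        have := dist_triangle_right ((F ^ (k : ℤ)) a) ((F ^ (k : ℤ)) a') ((F ^ (k : ℤ)) w)
        linarith
      · have := lt_of_lt_of_le (htail k) (min_le_left _ _)
        linarith
    linarith
  -- final contradiction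
  have hF0 : (F ^ (-(n : ℤ))) g = zz := by
    rw [hgdef, zpow_apply_add']
    simp
  have hpU : (F ^ (-(n : ℤ))) w ∈ U := by
    apply hball
    have h1 : dist ((F ^ (-(n : ℤ))) g) ((F ^ (-(n : ℤ))) w) < ε := hwU n
    rw [hF0] at h1
    have h2 : dist zz u₀ < r₀ / 2 := hz2
    have := dist_triangle ((F ^ (-(n : ℤ))) w) zz u₀
    rw [dist_comm] at h1
    rw [Metric.mem_ball]
    linarith
  have hθfin : θ ((F ^ (-(n : ℤ))) w) = θ ((F ^ (-(n : ℤ))) w') := by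
    rw [semiconjZ' hsemi, semiconjZ' hsemi, hθw]
  have hqU : (F ^ (-(n : ℤ))) w' ∈ U := by
    rw [← hUsat]
    exact ⟨(F ^ (-(n : ℤ))) w, hpU, hθfin⟩
  have := hUinj hpU hqU hθfin
  exact hwne ((F ^ (-(n : ℤ))).injective this)

section Symm

variable {X : Type*} [MetricSpace X] (F : Equiv.Perm X)

theorem Ws_symm (ε : ℝ) (x : X) : Ws F.symm ε x = Wu F ε x := by
  unfold Ws Wu
  ext y
  simp only [mem_setOf_eq, permZpow_symm']

theorem Wu_symm (ε : ℝ) (x : X) : Wu F.symm ε x = Ws F ε x := by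
  unfold Ws Wu
  ext y
  simp only [mem_setOf_eq, permZpow_symm', neg_neg]

theorem stableSet_symm (x : X) : stableSet F.symm x = unstableSet F x := by
  unfold stableSet unstableSet
  ext y
  simp only [mem_setOf_eq, permZpow_symm']

theorem unstableSet_symm (x : X) : unstableSet F.symm x = stableSet F x := by
  unfold stableSet unstableSet
  ext y
  simp only [mem_setOf_eq, permZpow_symm', neg_neg]

theorem CC_symm (h : CanonicalCoords F) : CanonicalCoords F.symm := by
  obtain ⟨ε₀, hε₀, H⟩ := h
  refine ⟨ε₀, hε₀, fun ε hε hεε₀ => ?_⟩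
  obtain ⟨δ, hδ, hbr⟩ := H ε hε hεε₀
  refine ⟨δ, hδ, fun x y hxy => ?_⟩
  obtain ⟨z, hz, huniq⟩ := hbr y x (by rwa [dist_comm])
  rw [Ws_symm, Wu_symm]
  refine ⟨z, ⟨hz.2, hz.1⟩, fun z' hz' => huniq z' ⟨hz'.2, hz'.1⟩⟩

theorem TopTransitive_symm (h : TopTransitive F) : TopTransitive F.symm := by
  intro U V hU hV hUne hVne
  obtain ⟨n, x, hx1, hx2⟩ := h V U hV hU hVne hUne
  refine ⟨n, (F ^ (n : ℤ)) x, ?_, hx1⟩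
  have : (F.symm ^ (n : ℤ)) ((F ^ (n : ℤ)) x) = x := by
    rw [permZpow_symm', ← Equiv.Perm.mul_apply, ← zpow_add]
    simp
  simp only [mem_preimage, this]
  exact hx2

end Symm

theorem delta_inj {X Y : Type*} [MetricSpace X] [CompactSpace X] [MetricSpace Y]
    {F : Equiv.Perm X} {f : Equiv.Perm Y} {θ : X → Y}
    (hFc : Continuous ⇑F) (hFc' : Continuous ⇑F.symm)
    (hCC : CanonicalCoords F) (hexpX : ∃ c > 0, Expansive F c)
    (hexpY : ∃ c > 0, Expansive f c)
    (hθc : Continuous θ) (hsemi : ∀ x, θ (F x) = f (θ x))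
    (hu : UResolving F θ) (hs : SResolving F θ) :
    ∃ δ > 0, ∀ p q : X, dist p q < δ → θ p = θ q → p = q := by
  obtain ⟨cX, hcX, hEX⟩ := hexpX
  obtain ⟨cY, hcY, hEY⟩ := hexpY
  obtain ⟨ε₀, hε₀, hCCf⟩ := hCC
  obtain ⟨ε₂, hε₂, hmod⟩ := unif_mod' hθc (half_pos hcY)
  set ε : ℝ := min (min ε₀ cX) ε₂ with hεdef
  have hεpos : 0 < ε := by positivity
  have hεε₀ : ε ≤ ε₀ := le_trans (min_le_left _ _) (min_le_left _ _)
  have hεcX : ε ≤ cX := le_trans (min_le_left _ _) (min_le_right _ _)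
  have hεε₂ : ε ≤ ε₂ := min_le_right _ _
  obtain ⟨δ, hδ, hbr⟩ := hCCf ε hεpos hεε₀
  refine ⟨δ, hδ, fun p q hpq hθpq => ?_⟩
  obtain ⟨z, ⟨hzS, hzU⟩, -⟩ := hbr p q hpq
  -- θ z = θ p
  have hθz : θ z = θ p := by
    by_contra hne2
    obtain ⟨m, hm⟩ := hEY (θ z) (θ p) hne2
    have hb : dist ((f ^ m) (θ z)) ((f ^ m) (θ p)) < cY := by
      rcases Int.eq_nat_or_neg m with ⟨k, rfl | rfl⟩
      · have e1 : dist ((F ^ (k : ℤ)) p) ((F ^ (k : ℤ)) z) < ε := hzS k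
        have : dist (θ ((F ^ (k : ℤ)) z)) (θ ((F ^ (k : ℤ)) p)) < cY / 2 := by
          rw [dist_comm] at e1
          exact hmod _ _ (lt_of_lt_of_le e1 hεε₂)
        calc dist ((f ^ (k : ℤ)) (θ z)) ((f ^ (k : ℤ)) (θ p))
            = dist (θ ((F ^ (k : ℤ)) z)) (θ ((F ^ (k : ℤ)) p)) := by
              rw [semiconjZ' hsemi, semiconjZ' hsemi]
          _ < cY / 2 := this
          _ < cY := by linarith
      · have e1 : dist ((F ^ (-(k : ℤ))) q) ((F ^ (-(k : ℤ))) z) < ε := hzU k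
        have h1 : dist (θ ((F ^ (-(k : ℤ))) z)) (θ ((F ^ (-(k : ℤ))) q)) < cY / 2 := by
          rw [dist_comm] at e1
          exact hmod _ _ (lt_of_lt_of_le e1 hεε₂)
        have h2 : θ ((F ^ (-(k : ℤ))) q) = (f ^ (-(k : ℤ))) (θ p) := by
          rw [semiconjZ' hsemi, hθpq]
        calc dist ((f ^ (-(k : ℤ))) (θ z)) ((f ^ (-(k : ℤ))) (θ p))
            = dist (θ ((F ^ (-(k : ℤ))) z)) (θ ((F ^ (-(k : ℤ))) q)) := by
              rw [semiconjZ' hsemi, h2]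
          _ < cY / 2 := h1
          _ < cY := by linarith
    linarith
  -- z = p via s-resolving
  have hzmem : z ∈ stableSet F p := lemAX hFc hFc' hEX hεcX hzS
  have hpmem : p ∈ stableSet F p := by
    unfold stableSet
    simp only [mem_setOf_eq, dist_self]
    exact tendsto_const_nhds
  have hzp : z = p := hs p hzmem hpmem hθz
  -- z = q via u-resolving
  have hzmem2 : z ∈ unstableSet F q := by
    have hWs : ∀ n : ℕ, dist ((F.symm ^ (n : ℤ)) q) ((F.symm ^ (n : ℤ)) z) < ε := by
      intro n
      rw [permZpow_symm']
      exact hzU n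
    have := lemAX hFc' (by simpa using hFc) (expansive_symm' hEX) hεcX hWs
    have h2 := stableSet_symm F q
    unfold stableSet at h2
    have hmem : z ∈ {y | Filter.Tendsto
        (fun n : ℕ => dist ((F.symm ^ (n : ℤ)) q) ((F.symm ^ (n : ℤ)) y)) atTop (𝓝 0)} := this
    rw [h2] at hmem
    exact hmem
  have hqmem : q ∈ unstableSet F q := by
    unfold unstableSet
    simp only [mem_setOf_eq, dist_self]
    exact tendsto_const_nhds
  have hzq : z = q := hu q hzmem2 hqmem (hθz.trans hθpq)
  rw [← hzp, hzq]

theorem side_lemmaX {X Y : Type*} [MetricSpace X] [CompactSpace X] [MetricSpace Y]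
    {θ : X → Y} (hθc : Continuous θ)
    {δ β : ℝ} (hβ : 0 < β) (h4β : 4 * β < δ)
    (hkey : ∀ p q : X, dist p q < δ → θ p = θ q → p = q)
    {W : Set Y} (hWo : IsOpen W)
    {c₀ : X} (hfib : ∀ y ∈ W, ∃ p ∈ Metric.closedBall c₀ β, θ p = y)
    {D : Set X} (hDo : IsOpen D) (hDd : Dense D) :
    ∃ V : Set Y, IsOpen V ∧ V ⊆ W ∧
      (∀ O : Set Y, IsOpen O → (O ∩ W).Nonempty → (O ∩ V).Nonempty) ∧
      (∀ y ∈ V, ∃ p, p ∈ D ∧ p ∈ Metric.ball c₀ (2 * β) ∧ θ p = y) := by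
  classical
  set KA : Set X := Metric.closedBall c₀ (2 * β) ∩ θ ⁻¹' (closure W) with hKAdef
  set A : Set X := Metric.ball c₀ (2 * β) ∩ θ ⁻¹' W with hAdef
  have hAopen : IsOpen A := Metric.isOpen_ball.inter (hWo.preimage hθc)
  have hAKA : A ⊆ KA :=
    inter_subset_inter Metric.ball_subset_closedBall (preimage_mono subset_closure)
  have hKAcomp : IsCompact KA :=
    (Metric.isClosed_closedBall.inter (isClosed_closure.preimage hθc)).isCompact
  have injKA : ∀ p ∈ KA, ∀ q ∈ KA, θ p = θ q → p = q := by
    intro p hp q hq h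
    refine hkey p q ?_ h
    have h1 : dist p c₀ ≤ 2 * β := Metric.mem_closedBall.mp hp.1
    have h2 : dist q c₀ ≤ 2 * β := Metric.mem_closedBall.mp hq.1
    have := dist_triangle_right p q c₀
    linarith
  set V : Set Y := W \ θ '' (KA \ (D ∩ A)) with hVdef
  have hVo : IsOpen V := by
    apply hWo.sdiff
    exact ((hKAcomp.diff (hDo.inter hAopen)).image hθc).isClosed
  refine ⟨V, hVo, diff_subset, ?_, ?_⟩
  · -- density in W
    rintro O hO ⟨y₁, hy₁O, hy₁W⟩
    obtain ⟨p₁, hp₁B, hp₁θ⟩ := hfib y₁ hy₁W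
    have hp₁mem : p₁ ∈ θ ⁻¹' (O ∩ W) ∩ Metric.ball c₀ (2 * β) := by
      refine ⟨?_, ?_⟩
      · rw [mem_preimage, hp₁θ]; exact ⟨hy₁O, hy₁W⟩
      · exact lt_of_le_of_lt (Metric.mem_closedBall.mp hp₁B) (by linarith)
    have hopen2 : IsOpen (θ ⁻¹' (O ∩ W) ∩ Metric.ball c₀ (2 * β)) :=
      ((hO.inter hWo).preimage hθc).inter Metric.isOpen_ball
    obtain ⟨d, hdD, hdmem⟩ := hDd.exists_mem_open hopen2 ⟨p₁, hp₁mem⟩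
    have hdA : d ∈ A := ⟨hdmem.2, hdmem.1.2⟩
    have hdO : θ d ∈ O := hdmem.1.1
    have hdW : θ d ∈ W := hdmem.1.2
    refine ⟨θ d, hdO, hdW, ?_⟩
    rintro ⟨k, ⟨hkKA, hknot⟩, hkθ⟩
    exact hknot (injKA k hkKA d (hAKA hdA) hkθ ▸ ⟨hdD, hdA⟩)
  · -- witnesses
    intro y hy
    obtain ⟨p, hpB, hpθ⟩ := hfib y hy.1
    have hpA : p ∈ A := by
      refine ⟨lt_of_le_of_lt (Metric.mem_closedBall.mp hpB) (by linarith), ?_⟩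
      rw [mem_preimage, hpθ]; exact hy.1
    have hpD : p ∈ D ∩ A := by
      by_contra hpd
      exact hy.2 ⟨p, ⟨hAKA hpA, hpd⟩, hpθ⟩
    exact ⟨p, hpD.1, hpA.1, hpθ⟩

theorem exists_open_inj {X Y : Type*} [MetricSpace X] [CompactSpace X] [MetricSpace Y]
    [CompactSpace Y] (hXne : Nonempty X) {θ : X → Y} (hθc : Continuous θ)
    (hθs : Function.Surjective θ)
    {δ : ℝ} (hδ : 0 < δ) (hkey : ∀ p q : X, dist p q < δ → θ p = θ q → p = q)
    {R : Set X} (hR : R ∈ residual X) (hRinj : Set.InjOn θ R) :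
    ∃ U : Set X, IsOpen U ∧ U.Nonempty ∧ Set.InjOn θ U ∧ θ ⁻¹' (θ '' U) = U := by
  classical
  set U : Set X := {x : X | ∀ q : X, θ q = θ x → q = x} with hUdef
  have hUinj : Set.InjOn θ U := fun p _ q hq h => hq p h
  have hUsat : θ ⁻¹' (θ '' U) = U := by
    ext x
    constructor
    · rintro ⟨u, huU, huθ⟩
      have hxu : x = u := huU x huθ.symm
      rw [hxu]; exact huU
    · intro hx; exact ⟨x, hx, rfl⟩
  have hUopen : IsOpen U := by
    rw [← isClosed_compl_iff]
    have hcompl : Uᶜ = Prod.fst '' {pq : X × X | θ pq.1 = θ pq.2 ∧ δ ≤ dist pq.1 pq.2} := by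
      ext x
      simp only [mem_compl_iff, mem_image, mem_setOf_eq, hUdef]
      constructor
      · intro hx
        push_neg at hx
        obtain ⟨q, hq1, hq2⟩ := hx
        refine ⟨(x, q), ⟨hq1.symm, ?_⟩, rfl⟩
        by_contra hlt
        push_neg at hlt
        rw [dist_comm] at hlt
        exact hq2 (hkey q x hlt hq1)
      · rintro ⟨⟨x', q⟩, ⟨h1, h2⟩, rfl⟩
        intro hU
        have := hU q h1.symm
        rw [this] at h2
        simp only [dist_self] at h2
        linarith
    rw [hcompl]
    have hEc : IsClosed {pq : X × X | θ pq.1 = θ pq.2 ∧ δ ≤ dist pq.1 pq.2} :=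
      (isClosed_eq (hθc.comp continuous_fst) (hθc.comp continuous_snd)).inter
        (isClosed_le continuous_const continuous_dist)
    exact (hEc.isCompact.image continuous_fst).isClosed
  refine ⟨U, hUopen, ?_, hUinj, hUsat⟩
  by_contra hne
  rw [Set.not_nonempty_iff_eq_empty] at hne
  have hall : ∀ x : X, ∃ q : X, θ q = θ x ∧ q ≠ x := by
    intro x
    have hx : x ∉ U := by rw [hne]; exact notMem_empty x
    have hx2 : ¬ ∀ q : X, θ q = θ x → q = x := hx
    push_neg at hx2
    exact hx2
  haveI hYne : Nonempty Y := ⟨θ hXne.some⟩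
  set β : ℝ := δ / 8 with hβdef
  have hβ : 0 < β := by positivity
  obtain ⟨t, -, htfin, hcov⟩ := finite_cover_balls_of_compact (isCompact_univ : IsCompact (univ : Set X)) hβ
  set P : Set (X × X) := t ×ˢ t with hPdef
  have hPfin : P.Finite := htfin.prod htfin
  haveI : Countable ↥P := hPfin.countable.to_subtype
  set fS : ↥P → Set Y := fun ab =>
    if 6 * β ≤ dist ab.1.1 ab.1.2 then
      θ '' Metric.closedBall ab.1.1 β ∩ θ '' Metric.closedBall ab.1.2 β else ∅ with hfSdef
  have hcl : ∀ ab : ↥P, IsClosed (fS ab) := by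
    intro ab
    rw [hfSdef]
    dsimp only
    split_ifs
    · exact ((Metric.isClosed_closedBall.isCompact.image hθc).isClosed).inter
        ((Metric.isClosed_closedBall.isCompact.image hθc).isClosed)
    · exact isClosed_empty
  have hun : ⋃ ab : ↥P, fS ab = univ := by
    rw [eq_univ_iff_forall]
    intro y
    obtain ⟨x, rfl⟩ := hθs y
    obtain ⟨x', hx'θ, hx'ne⟩ := hall x
    have hd : δ ≤ dist x' x := by
      by_contra hlt
      push_neg at hlt
      exact hx'ne (hkey x' x hlt hx'θ)
    have hx1 := hcov (mem_univ x)
    rw [mem_iUnion₂] at hx1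
    obtain ⟨a, hat, hxa⟩ := hx1
    have hx2 := hcov (mem_univ x')
    rw [mem_iUnion₂] at hx2
    obtain ⟨b, hbt, hx'b⟩ := hx2
    have h6 : 6 * β ≤ dist a b := by
      have t1 : dist x' x ≤ dist x' b + dist b a + dist a x := dist_triangle4 x' b a x
      have t2 : dist x' b < β := hx'b
      have t3 : dist a x < β := by rw [dist_comm]; exact hxa
      have : dist b a = dist a b := dist_comm b a
      rw [hβdef] at *
      linarith
    rw [mem_iUnion]
    refine ⟨⟨(a, b), mk_mem_prod hat hbt⟩, ?_⟩
    rw [hfSdef]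
    dsimp only
    rw [if_pos h6]
    exact ⟨⟨x, Metric.mem_closedBall.mpr (le_of_lt hxa), rfl⟩,
      ⟨x', Metric.mem_closedBall.mpr (le_of_lt hx'b), hx'θ⟩⟩
  obtain ⟨ab, hab⟩ := nonempty_interior_of_iUnion_of_closed hcl hun
  set a : X := ab.1.1 with hadef
  set b : X := ab.1.2 with hbdef
  have h6 : 6 * β ≤ dist a b := by
    by_contra h
    rw [hfSdef] at hab
    dsimp only at hab
    rw [if_neg h] at hab
    simp at hab
  rw [hfSdef] at hab
  dsimp only at hab
  rw [if_pos h6] at hab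
  set W : Set Y := interior (θ '' Metric.closedBall a β ∩ θ '' Metric.closedBall b β) with hWdef
  have hWo : IsOpen W := isOpen_interior
  have hWne : W.Nonempty := hab
  have hfibA : ∀ y ∈ W, ∃ p ∈ Metric.closedBall a β, θ p = y := by
    intro y hy
    obtain ⟨p, hp, hpθ⟩ := (interior_subset hy).1
    exact ⟨p, hp, hpθ⟩
  have hfibB : ∀ y ∈ W, ∃ p ∈ Metric.closedBall b β, θ p = y := by
    intro y hy
    obtain ⟨p, hp, hpθ⟩ := (interior_subset hy).2
    exact ⟨p, hp, hpθ⟩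
  obtain ⟨t₀, ht₀R, hGδ, ht₀d⟩ := mem_residual.1 hR
  obtain ⟨T, hTo, hTc, rfl⟩ := hGδ
  haveI : Countable ↥T := hTc.to_subtype
  have h4β : 4 * β < δ := by rw [hβdef]; linarith
  have hTD : ∀ D : ↥T, IsOpen (D : Set X) ∧ Dense (D : Set X) := fun D =>
    ⟨hTo D D.2, ht₀d.mono (sInter_subset_of_mem D.2)⟩
  choose VA hVAo hVAW hVAd hVAwit using fun D : ↥T =>
    side_lemmaX hθc hβ h4β hkey hWo hfibA (hTD D).1 (hTD D).2
  choose VB hVBo hVBW hVBd hVBwit using fun D : ↥T =>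
    side_lemmaX hθc hβ h4β hkey hWo hfibB (hTD D).1 (hTD D).2
  have hdense : ∀ V : Set Y, IsOpen V →
      (∀ O : Set Y, IsOpen O → (O ∩ W).Nonempty → (O ∩ V).Nonempty) →
      Dense (V ∪ (closure W)ᶜ) := by
    intro V hVo hVd
    rw [dense_iff_inter_open]
    intro O hO hOne
    by_cases hOW : (O ∩ W).Nonempty
    · obtain ⟨y, hyO, hyV⟩ := hVd O hO hOW
      exact ⟨y, hyO, Or.inl hyV⟩
    · rw [not_nonempty_iff_eq_empty] at hOW
      obtain ⟨y, hy⟩ := hOne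
      refine ⟨y, hy, Or.inr ?_⟩
      intro hmem
      obtain ⟨z, hz⟩ := _root_.mem_closure_iff.1 hmem O hO hy
      rw [← mem_empty_iff_false z, ← hOW]
      exact hz
  have hQ : (⋂ D : ↥T, ((VA D ∪ (closure W)ᶜ) ∩ (VB D ∪ (closure W)ᶜ))) ∈ residual Y := by
    refine countable_iInter_mem.2 fun D => inter_mem ?_ ?_
    · exact residual_of_dense_open ((hVAo D).union isClosed_closure.isOpen_compl)
        (hdense _ (hVAo D) (hVAd D))
    · exact residual_of_dense_open ((hVBo D).union isClosed_closure.isOpen_compl)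
        (hdense _ (hVBo D) (hVBd D))
  obtain ⟨y₀, hy₀Q, hy₀W⟩ := (dense_of_mem_residual hQ).exists_mem_open hWo hWne
  obtain ⟨p₀, hp₀B, hp₀θ⟩ := hfibA y₀ hy₀W
  obtain ⟨q₀, hq₀B, hq₀θ⟩ := hfibB y₀ hy₀W
  have hy₀cl : y₀ ∈ closure W := subset_closure hy₀W
  have hp₀R : p₀ ∈ ⋂₀ T := by
    rw [mem_sInter]
    intro D hD
    have hyA : y₀ ∈ VA ⟨D, hD⟩ := by
      have hmem := mem_iInter.1 hy₀Q ⟨D, hD⟩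
      rcases hmem.1 with h | h
      · exact h
      · exact absurd hy₀cl h
    obtain ⟨p, hpD, hpball, hpθ⟩ := hVAwit ⟨D, hD⟩ y₀ hyA
    have hpp : p = p₀ := by
      refine hkey p p₀ ?_ (hpθ.trans hp₀θ.symm)
      have t1 : dist p a < 2 * β := hpball
      have t2 : dist p₀ a ≤ β := hp₀B
      have := dist_triangle_right p p₀ a
      rw [hβdef] at *
      linarith
    rw [← hpp]
    exact hpD
  have hq₀R : q₀ ∈ ⋂₀ T := by
    rw [mem_sInter]
    intro D hD
    have hyB : y₀ ∈ VB ⟨D, hD⟩ := by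
      have hmem := mem_iInter.1 hy₀Q ⟨D, hD⟩
      rcases hmem.2 with h | h
      · exact h
      · exact absurd hy₀cl h
    obtain ⟨p, hpD, hpball, hpθ⟩ := hVBwit ⟨D, hD⟩ y₀ hyB
    have hpp : p = q₀ := by
      refine hkey p q₀ ?_ (hpθ.trans hq₀θ.symm)
      have t1 : dist p b < 2 * β := hpball
      have t2 : dist q₀ b ≤ β := hq₀B
      have := dist_triangle_right p q₀ b
      rw [hβdef] at *
      linarith
    rw [← hpp]
    exact hpD
  have hpqne : p₀ ≠ q₀ := by
    intro h
    rw [h] at hp₀B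
    have t1 : dist q₀ a ≤ β := hp₀B
    have t2 : dist q₀ b ≤ β := hq₀B
    have t3 : dist a b ≤ dist a q₀ + dist q₀ b := dist_triangle a q₀ b
    rw [dist_comm] at t1
    linarith
  exact hpqne (hRinj (ht₀R hp₀R) (ht₀R hq₀R) (hp₀θ.trans hq₀θ.symm))

theorem resid_of_inj {X Y : Type*} [MetricSpace X] [MetricSpace Y]
    {F : Equiv.Perm X} {f : Equiv.Perm Y} {θ : X → Y}
    (hFc : Continuous ⇑F) (hFc' : Continuous ⇑F.symm)
    (htr : TopTransitive F) (hsemi : ∀ x, θ (F x) = f (θ x))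
    {U : Set X} (hUo : IsOpen U) (hUne : U.Nonempty) (hUinj : Set.InjOn θ U)
    (hUsat : θ ⁻¹' (θ '' U) = U) :
    ∃ R ∈ residual X, Set.InjOn θ R := by
  set R : Set X := ⋃ n : ℤ, (F ^ n) '' U with hRdef
  have hRo : IsOpen R := by
    refine isOpen_iUnion fun n => ?_
    have himg : (F ^ n) '' U = ⇑((F ^ n).symm) ⁻¹' U := by
      rw [Equiv.image_eq_preimage_symm]
    rw [himg]
    have hc : Continuous ⇑((F ^ n).symm) := by
      have he : ⇑((F ^ n).symm) = ⇑(F ^ (-n)) := by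
        rw [← Equiv.Perm.inv_def, ← zpow_neg]
      rw [he]
      exact contZ' hFc hFc' (-n)
    exact hUo.preimage hc
  have hUR : U ⊆ R := by
    intro u hu
    rw [hRdef, mem_iUnion]
    exact ⟨0, by simpa using hu⟩
  have hRne : R.Nonempty := by
    obtain ⟨u₀, hu₀⟩ := hUne
    exact ⟨u₀, hUR hu₀⟩
  have hmemR : ∀ (m : ℤ) (x : X), (F ^ m) x ∈ R → x ∈ R := by
    intro m x hx
    rw [hRdef, mem_iUnion] at hx ⊢
    obtain ⟨k, u, huU, hux⟩ := hx
    refine ⟨k - m, u, huU, ?_⟩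
    have h2 := congrArg (⇑(F ^ (-m))) hux
    rw [zpow_apply_add', zpow_apply_add'] at h2
    rw [show -m + k = k - m by ring] at h2
    rw [show -m + m = (0 : ℤ) by ring] at h2
    simpa using h2
  have hRd : Dense R := by
    rw [dense_iff_inter_open]
    intro O hO hOne
    obtain ⟨n, x, hx1, hx2⟩ := htr R O hRo hO hRne hOne
    exact ⟨x, hx2, hmemR n x hx1⟩
  refine ⟨R, residual_of_dense_open hRo hRd, ?_⟩
  intro p hp q hq hθpq
  rw [hRdef, mem_iUnion] at hp
  obtain ⟨m, u, huU, hup⟩ := hp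
  have hu2 : (F ^ (-m)) p = u := by
    rw [← hup, zpow_apply_add']
    simp
  have hθu : θ ((F ^ (-m)) q) = θ ((F ^ (-m)) p) := by
    rw [semiconjZ' hsemi, semiconjZ' hsemi, hθpq]
  have hpU : (F ^ (-m)) p ∈ U := by rw [hu2]; exact huU
  have hqU : (F ^ (-m)) q ∈ U := by
    rw [← hUsat]
    exact ⟨(F ^ (-m)) p, hpU, hθu.symm⟩
  have heq := hUinj hpU hqU hθu.symm
  exact (F ^ (-m)).injective heq

end Helpers

end Proofs9

/-- A factor map from a transitive Smale space to a transitive finitely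
presented system is injective on a nonempty open set iff it is u-resolving, s-resolving
and injective on a residual set. -/
theorem stmt9 {X Y : Type*} [MetricSpace X] [CompactSpace X] [MetricSpace Y] [CompactSpace Y]
    (F : Equiv.Perm X) (f : Equiv.Perm Y)
    (hX : IsSmale F) (hXt : TopTransitive F)
    (hY : FinitelyPresented f) (hYt : TopTransitive f)
    (θ : X → Y) (hθ : IsFactorMap F f θ) :
    (∃ U : Set X, IsOpen U ∧ U.Nonempty ∧ Set.InjOn θ U ∧ θ ⁻¹' (θ '' U) = U) ↔
      (UResolving F θ ∧ SResolving F θ ∧ ∃ R ∈ residual X, Set.InjOn θ R) := by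
  obtain ⟨hFc, hFc', hexpX, hCC⟩ := hX
  obtain ⟨hθc, hθs, hsemi⟩ := hθ
  obtain ⟨hfc, hfc', hexpY, N, S, hsft, hinv, hSne, φ, hφ⟩ := hY
  constructor
  · rintro ⟨U, hUo, hUne, hUinj, hUsat⟩
    refine ⟨?_, ?_, ?_⟩
    · exact ures_of_inj hCC hexpX hexpY hXt hθc hsemi hUo hUne hUinj hUsat
    · have hexpXs : ∃ c > 0, Expansive F.symm c := by
        obtain ⟨c, hc, he⟩ := hexpX
        exact ⟨c, hc, expansive_symm' he⟩
      have hexpYs : ∃ c > 0, Expansive f.symm c := by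
        obtain ⟨c, hc, he⟩ := hexpY
        exact ⟨c, hc, expansive_symm' he⟩
      have hsemis : ∀ x, θ (F.symm x) = f.symm (θ x) := by
        intro x
        have h := hsemi (F.symm x)
        rw [Equiv.apply_symm_apply] at h
        rw [h, Equiv.symm_apply_apply]
      have hsymm : UResolving F.symm θ :=
        ures_of_inj (CC_symm F hCC) hexpXs hexpYs (TopTransitive_symm F hXt)
          hθc hsemis hUo hUne hUinj hUsat
      intro x
      have h := hsymm x
      rwa [unstableSet_symm] at h
    · exact resid_of_inj hFc hFc' hXt hsemi hUo hUne hUinj hUsat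
  · rintro ⟨hu, hs, R, hR, hRinj⟩
    have hYne : Nonempty Y := by
      obtain ⟨s0, hs0⟩ := hSne
      exact ⟨φ s0⟩
    have hXne : Nonempty X := by
      obtain ⟨y⟩ := hYne
      obtain ⟨x, -⟩ := hθs y
      exact ⟨x⟩
    obtain ⟨δ, hδ, hkey⟩ := delta_inj hFc hFc' hCC hexpX hexpY hθc hsemi hu hs
    exact exists_open_inj hXne hθc hθs hδ hkey hR hRinj
end
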